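/- arXiv:1912.06966 — 7 statements merged into one kernel-verified Lean document; each statement's English description precedes it below -/
import Mathlib

section
/- Let G be a finite simple graph, let S ⊆ V(G), and let v ∈ V(G) ∖ S be a vertex of degree exactly 1 in G. Then for every set X ⊆ V(G) ∖ S, the graph G − X is an r-pseudoforest if and only if (G − v) − (X ∖ {v}) is an r-pseudoforest. In particular, the instances (G, S, k, r) and (G − v, S, k, r) of Disjoint r-pseudoforest Deletion have the same answer. -/
/-- A graph is an `r`-pseudoforest if every connected component can be made into a forest
by deleting at most `r` edges. -/
def IsRPseudoforest {V : Type*} (G : SimpleGraph V) (r : ℕ) : Prop :=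
  ∀ c : G.ConnectedComponent, ∃ F : Finset (Sym2 V),
    F.card ≤ r ∧ ↑F ⊆ G.edgeSet ∧ ((G.deleteEdges ↑F).induce c.supp).IsAcyclic

lemma walk_map_exists {α β : Type*} {A : SimpleGraph α} {B : SimpleGraph β} (f : α → β) (K : Set α)
    (hf : ∀ ⦃a b⦄, a ∈ K → b ∈ K → A.Adj a b → B.Adj (f a) (f b)) :
    ∀ {x y : α} (p : A.Walk x y), (∀ z ∈ p.support, z ∈ K) →
      ∃ q : B.Walk (f x) (f y), q.support = p.support.map f ∧
        q.edges = p.edges.map (Sym2.map f) := by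
  intro x y p
  induction p with
  | nil => exact fun _ => ⟨.nil, by simp, by simp⟩
  | @cons x z y h p ih =>
      intro hK
      obtain ⟨q, hs, he⟩ := ih (fun u hu => hK u (by simp [hu]))
      have hx : x ∈ K := hK x (by simp)
      have hz : z ∈ K := hK z (by simp)
      exact ⟨.cons (hf hx hz h) q, by simp [hs], by simp [he]⟩

lemma cycle_map_exists {α β : Type*} {A : SimpleGraph α} {B : SimpleGraph β} (f : α → β) (K : Set α)
    (hf : ∀ ⦃a b⦄, a ∈ K → b ∈ K → A.Adj a b → B.Adj (f a) (f b))
    (hinj : Set.InjOn f K) {x : α} (p : A.Walk x x) (hp : p.IsCycle)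
    (hK : ∀ z ∈ p.support, z ∈ K) :
    ∃ q : B.Walk (f x) (f x), q.IsCycle := by
  obtain ⟨q, hs, he⟩ := walk_map_exists f K hf p hK
  refine ⟨q, ⟨⟨⟨?_⟩, ?_⟩, ?_⟩⟩
  · -- edges nodup
    rw [he]
    refine List.Nodup.map_on ?_ hp.edges_nodup
    intro e1 he1 e2 he2 hmap
    induction e1 with
    | h a b =>
      induction e2 with
      | h c d =>
        simp only [Sym2.map_pair_eq, Sym2.eq_iff] at hmap ⊢
        have ha : a ∈ K := hK a (SimpleGraph.Walk.fst_mem_support_of_mem_edges p he1)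
        have hb : b ∈ K := hK b (SimpleGraph.Walk.snd_mem_support_of_mem_edges p he1)
        have hc : c ∈ K := hK c (SimpleGraph.Walk.fst_mem_support_of_mem_edges p he2)
        have hd : d ∈ K := hK d (SimpleGraph.Walk.snd_mem_support_of_mem_edges p he2)
        rcases hmap with ⟨h1, h2⟩ | ⟨h1, h2⟩
        · exact Or.inl ⟨hinj ha hc h1, hinj hb hd h2⟩
        · exact Or.inr ⟨hinj ha hd h1, hinj hb hc h2⟩
  · -- ne nil
    intro hqnil
    have : q.edges = [] := by rw [hqnil]; simp
    rw [he] at this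
    have hpe : p.edges = [] := by simpa using this
    have := hp.ne_nil
    refine this (SimpleGraph.Walk.length_eq_zero_iff.mp ?_).eq_nil
    have := congrArg List.length hpe
    simpa [SimpleGraph.Walk.length_edges] using this
  · -- support tail nodup
    rw [hs, ← List.map_tail]
    refine List.Nodup.map_on ?_ hp.support_nodup
    intro a ha b hb
    exact hinj (hK a (List.mem_of_mem_tail ha)) (hK b (List.mem_of_mem_tail hb))

lemma reach_map {α β : Type*} {A : SimpleGraph α} {B : SimpleGraph β} (f : α → β)
    (hf : ∀ ⦃a b⦄, A.Adj a b → B.Adj (f a) (f b)) {x y : α} (h : A.Reachable x y) :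
    B.Reachable (f x) (f y) := by
  obtain ⟨p⟩ := h
  obtain ⟨q, -, -⟩ := walk_map_exists f Set.univ (fun a b _ _ h => hf h) p (fun _ _ => trivial)
  exact ⟨q⟩

lemma pseudoforest_anti {V : Type*} [Fintype V] (G : SimpleGraph V) (r : ℕ) {s t : Set V}
    (hst : t ⊆ s) (hA : IsRPseudoforest (G.induce s) r) :
    IsRPseudoforest (G.induce t) r := by
  classical
  intro c'
  obtain ⟨z, hz⟩ := c'.exists_rep
  set ι : ↥t → ↥s := fun x => ⟨x.1, hst x.2⟩ with hι
  have hιinj : Function.Injective ι := by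
    intro a b h
    apply Subtype.ext
    have h2 := congrArg (fun x : ↥s => (x : V)) h
    exact h2
  set c : (G.induce s).ConnectedComponent := (G.induce s).connectedComponentMk (ι z) with hc
  obtain ⟨F, hFcard, hFsub, hFacyc⟩ := hA c
  have hfin : {e : Sym2 ↥t | e ∈ (G.induce t).edgeSet ∧ Sym2.map ι e ∈ F}.Finite :=
    Set.toFinite _
  refine ⟨hfin.toFinset, ?_, ?_, ?_⟩
  · refine le_trans (Finset.card_le_card_of_injOn (Sym2.map ι) ?_ ?_) hFcard
    · intro e he
      exact ((hfin.mem_toFinset).mp he).2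
    · intro e1 _ e2 _ h
      exact Sym2.map.injective hιinj h
  · intro e he
    exact ((hfin.mem_toFinset).mp he).1
  · -- acyclic
    intro a p hp
    have hmem : ∀ x : ↥(c'.supp), ι x.1 ∈ c.supp := by
      rintro ⟨x, hx⟩
      rw [SimpleGraph.ConnectedComponent.mem_supp_iff] at hx ⊢
      have hreach : (G.induce t).Reachable x z :=
        SimpleGraph.ConnectedComponent.exact (hx.trans hz.symm)
      have : (G.induce s).Reachable (ι x) (ι z) :=
        reach_map ι (fun a b h => by simpa using h) hreach
      exact (SimpleGraph.ConnectedComponent.eq.mpr this).trans hc.symm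
    set f : ↥(c'.supp) → ↥(c.supp) := fun x => ⟨ι x.1, hmem x⟩ with hf
    have hadj : ∀ ⦃a b : ↥(c'.supp)⦄, a ∈ (Set.univ : Set _) → b ∈ Set.univ →
        (((G.induce t).deleteEdges ↑hfin.toFinset).induce c'.supp).Adj a b →
        (((G.induce s).deleteEdges ↑F).induce c.supp).Adj (f a) (f b) := by
      rintro a b - - hab
      simp only [SimpleGraph.comap_adj, Function.Embedding.coe_subtype,
        SimpleGraph.deleteEdges_adj, Finset.mem_coe, Set.Finite.mem_toFinset,
        Set.mem_setOf_eq] at hab ⊢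
      obtain ⟨h1, h2⟩ := hab
      refine ⟨by simpa using h1, ?_⟩
      intro hmemF
      exact h2 ⟨((G.induce t).mem_edgeSet).mpr (by simpa using h1), by simpa using hmemF⟩
    have hfinj : Set.InjOn f Set.univ := by
      intro a _ b _ h
      rw [hf] at h
      simp only [Subtype.mk.injEq] at h
      exact Subtype.ext (hιinj h)
    obtain ⟨q, hq⟩ := cycle_map_exists f Set.univ hadj hfinj p hp (fun _ _ => trivial)
    exact hFacyc q hq

lemma reroute {V : Type*} (G : SimpleGraph V) {t : Set V} {v : V}
    (hdeg : ∀ a b, G.Adj v a → G.Adj v b → a = b) :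
    ∀ (n : ℕ) {x y : ↥(insert v t)} (p : (G.induce (insert v t)).Walk x y),
      p.length ≤ n → ∀ (hx : (x : V) ≠ v) (hy : (y : V) ≠ v),
      (G.induce t).Reachable ⟨x, (Set.mem_insert_iff.mp x.2).resolve_left hx⟩
        ⟨y, (Set.mem_insert_iff.mp y.2).resolve_left hy⟩ := by
  intro n
  induction n with
  | zero =>
      intro x y p hn hx hy
      cases p with
      | nil => exact SimpleGraph.Reachable.refl _
      | cons h q => simp [SimpleGraph.Walk.length_cons] at hn
  | succ n ih =>
      intro x y p hn hx hy
      cases p with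
      | nil => exact SimpleGraph.Reachable.refl _
      | @cons _ z _ h q =>
          by_cases hz : (z : V) = v
          · cases q with
            | nil => exact absurd hz hy
            | @cons _ z2 _ h2 q2 =>
                have ha1 : G.Adj (x : V) (z : V) := by simpa using h
                have ha2 : G.Adj (z : V) (z2 : V) := by simpa using h2
                rw [hz] at ha1 ha2
                have hxz2 : (x : V) = (z2 : V) := hdeg _ _ ha1.symm ha2
                have hz2v : (z2 : V) ≠ v := fun hh => hx (hxz2.trans hh)
                have hlen : q2.length ≤ n := by
                  simp only [SimpleGraph.Walk.length_cons] at hn; omega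
                have hr := ih q2 hlen hz2v hy
                have hxe : (⟨x, (Set.mem_insert_iff.mp x.2).resolve_left hx⟩ : ↥t) =
                    ⟨z2, (Set.mem_insert_iff.mp z2.2).resolve_left hz2v⟩ :=
                  Subtype.ext hxz2
                rw [hxe]
                exact hr
          · have ha : (G.induce t).Adj ⟨x, (Set.mem_insert_iff.mp x.2).resolve_left hx⟩
                ⟨z, (Set.mem_insert_iff.mp z.2).resolve_left hz⟩ := by
              simpa using (by simpa using h : G.Adj (x : V) (z : V))
            have hlen : q.length ≤ n := by
              simp only [SimpleGraph.Walk.length_cons] at hn; omega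
            exact ha.reachable.trans (ih q hlen hz hy)

lemma pseudoforest_extend {V : Type*} [Fintype V] (G : SimpleGraph V) (r : ℕ)
    {t : Set V} {v : V} (hv : v ∉ t)
    (hdeg : ∀ a b, G.Adj v a → G.Adj v b → a = b)
    (hB : IsRPseudoforest (G.induce t) r) :
    IsRPseudoforest (G.induce (insert v t)) r := by
  classical
  intro c
  by_cases hnz : ∃ x : ↥(insert v t), x ∈ c.supp ∧ (x : V) ≠ v
  · obtain ⟨x₀, hx₀c, hx₀v⟩ := hnz
    have hx₀t : (x₀ : V) ∈ t := (Set.mem_insert_iff.mp x₀.2).resolve_left hx₀v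
    set d₀ : ↥t := ⟨x₀, hx₀t⟩ with hd₀
    set c' := (G.induce t).connectedComponentMk d₀ with hc'
    obtain ⟨F', hF'card, hF'sub, hF'acyc⟩ := hB c'
    set up : ↥t → ↥(insert v t) := fun x => ⟨x.1, Set.mem_insert_of_mem _ x.2⟩ with hup
    set F : Finset (Sym2 ↥(insert v t)) := F'.image (Sym2.map up) with hF
    refine ⟨F, le_trans Finset.card_image_le hF'card, ?_, ?_⟩
    · intro e he
      simp only [hF, Finset.coe_image, Set.mem_image, Finset.mem_coe] at he
      obtain ⟨e', he', rfl⟩ := he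
      have hadj' := hF'sub he'
      induction e' with
      | h a b =>
          have hab : (G.induce t).Adj a b := ((G.induce t).mem_edgeSet).mp hadj'
          rw [Sym2.map_pair_eq, SimpleGraph.mem_edgeSet]
          simpa using (by simpa using hab : G.Adj (a : V) (b : V))
    · -- acyclicity
      intro a p hp
      by_cases hwp : ∃ hw : (⟨v, Set.mem_insert _ _⟩ : ↥(insert v t)) ∈ c.supp,
          (⟨⟨v, Set.mem_insert _ _⟩, hw⟩ : ↥(c.supp)) ∈ p.support
      · -- cycle passes through v : contradiction with degree
        obtain ⟨hw, hWp⟩ := hwp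
        set W : ↥(c.supp) := ⟨⟨v, Set.mem_insert _ _⟩, hw⟩ with hWdef
        have hp' := hp.rotate hWp
        set p' := p.rotate W hWp with hp'def
        have hnn : ¬ p'.Nil := by
          intro hnil
          exact hp'.ne_nil hnil.eq_nil
        obtain ⟨b, hWb, q, hq1⟩ := SimpleGraph.Walk.not_nil_iff.mp hnn
        have hnnq : ¬ q.reverse.Nil := by
          intro hnil
          have : q.reverse.length = 0 := SimpleGraph.Walk.nil_iff_length_eq.mp hnil
          have hbW : b = W := SimpleGraph.Walk.eq_of_length_eq_zero
            (by simpa using this : q.length = 0)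
          exact hWb.ne (hbW ▸ rfl)
        obtain ⟨b2, hWb2, q2, hq2⟩ := SimpleGraph.Walk.not_nil_iff.mp hnnq
        -- project adjacencies to G
        have g1 : G.Adj v ((b : ↥(insert v t)) : V) := by
          have := hWb
          simp only [SimpleGraph.comap_adj, Function.Embedding.coe_subtype,
            SimpleGraph.deleteEdges_adj] at this
          exact this.1
        have g2 : G.Adj v ((b2 : ↥(insert v t)) : V) := by
          have := hWb2
          simp only [SimpleGraph.comap_adj, Function.Embedding.coe_subtype,
            SimpleGraph.deleteEdges_adj] at this
          exact this.1
        have hbb2 : b = b2 := Subtype.ext (Subtype.ext (hdeg _ _ g1 g2))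
        have hmem2 : s(W, b2) ∈ q.edges := by
          have : s(W, b2) ∈ q.reverse.edges := by
            rw [hq2]; simp
          simpa [SimpleGraph.Walk.edges_reverse, List.mem_reverse] using this
        have hnodup := hp'.edges_nodup
        rw [hq1] at hnodup
        simp only [SimpleGraph.Walk.edges_cons, List.nodup_cons] at hnodup
        exact hnodup.1 (hbb2 ▸ hmem2)
      · -- cycle avoids v : map into the smaller graph
        have hKsupp : ∀ z ∈ p.support, ((z : ↥(c.supp)) : ↥(insert v t)).1 ≠ v := by
          intro z hz hzv
          apply hwp
          have hzw : (z : ↥(insert v t)) = ⟨v, Set.mem_insert _ _⟩ := Subtype.ext hzv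
          have hwc : (⟨v, Set.mem_insert _ _⟩ : ↥(insert v t)) ∈ c.supp := hzw ▸ z.2
          refine ⟨hwc, ?_⟩
          have : z = ⟨⟨v, Set.mem_insert _ _⟩, hwc⟩ := Subtype.ext hzw
          exact this ▸ hz
        have hmem : ∀ (z : ↥(insert v t)) (hzc : z ∈ c.supp) (hz : (z : V) ≠ v),
            (⟨z, (Set.mem_insert_iff.mp z.2).resolve_left hz⟩ : ↥t) ∈ c'.supp := by
          intro z hzc hz
          have hreach : (G.induce (insert v t)).Reachable z x₀ :=
            SimpleGraph.ConnectedComponent.exact (hzc.trans hx₀c.symm)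
          obtain ⟨pp⟩ := hreach
          have := reroute G hdeg pp.length pp le_rfl hz hx₀v
          rw [SimpleGraph.ConnectedComponent.mem_supp_iff, hc']
          exact SimpleGraph.ConnectedComponent.eq.mpr this
        set f : ↥(c.supp) → ↥(c'.supp) := fun z =>
          if hz : ((z : ↥(insert v t)) : V) ≠ v then
            ⟨⟨z.1.1, (Set.mem_insert_iff.mp z.1.2).resolve_left hz⟩, hmem z.1 z.2 hz⟩
          else ⟨d₀, by rw [SimpleGraph.ConnectedComponent.mem_supp_iff, hc']⟩ with hfdef
        set K : Set ↥(c.supp) := {z | ((z : ↥(insert v t)) : V) ≠ v} with hK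
        have hfval : ∀ (z : ↥(c.supp)) (hz : ((z : ↥(insert v t)) : V) ≠ v),
            f z = ⟨⟨z.1.1, (Set.mem_insert_iff.mp z.1.2).resolve_left hz⟩, hmem z.1 z.2 hz⟩ := by
          intro z hz
          simp only [hfdef]
          rw [dif_pos hz]
        have hadj : ∀ ⦃a b : ↥(c.supp)⦄, a ∈ K → b ∈ K →
            (((G.induce (insert v t)).deleteEdges ↑F).induce c.supp).Adj a b →
            (((G.induce t).deleteEdges ↑F').induce c'.supp).Adj (f a) (f b) := by
          intro a b ha hb hab
          simp only [SimpleGraph.comap_adj, Function.Embedding.coe_subtype,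
            SimpleGraph.deleteEdges_adj] at hab
          obtain ⟨h1, h2⟩ := hab
          have hGa : G.Adj (a.1.1 : V) (b.1.1 : V) := by simpa using h1
          rw [hfval a ha, hfval b hb]
          simp only [SimpleGraph.comap_adj, Function.Embedding.coe_subtype,
            SimpleGraph.deleteEdges_adj]
          refine ⟨by simpa using hGa, ?_⟩
          intro hmemF'
          apply h2
          simp only [hF, Finset.coe_image, Set.mem_image, Finset.mem_coe]
          exact ⟨s(⟨a.1.1, (Set.mem_insert_iff.mp a.1.2).resolve_left ha⟩,
            ⟨b.1.1, (Set.mem_insert_iff.mp b.1.2).resolve_left hb⟩),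
            by simpa using hmemF', by rw [Sym2.map_pair_eq]⟩
        have hinj : Set.InjOn f K := by
          intro a ha b hb h
          rw [hfval a ha, hfval b hb] at h
          have : a.1.1 = b.1.1 := by
            have h3 := congrArg (fun x : ↥(c'.supp) => ((x : ↥t) : V)) h
            exact h3
          exact Subtype.ext (Subtype.ext this)
        obtain ⟨q, hq⟩ := cycle_map_exists f K hadj hinj p hp hKsupp
        exact hF'acyc q hq
  · -- all of c.supp is {v}
    push_neg at hnz
    refine ⟨∅, by simp, by simp, ?_⟩
    intro a p hp
    cases p with
    | nil => exact hp.ne_nil rfl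
    | @cons _ z _ h q =>
        have hadj : G.Adj (a.1.1 : V) (z.1.1 : V) := by
          have := h
          simp only [SimpleGraph.comap_adj, Function.Embedding.coe_subtype,
            SimpleGraph.deleteEdges_adj] at this
          simpa using this.1
        have h1 : (a.1 : V) = v := hnz a.1 a.2
        have h2 : (z.1 : V) = v := hnz z.1 z.2
        rw [h1, h2] at hadj
        exact G.irrefl hadj

/-- If `v ∉ S` has degree exactly `1` in `G`, then for every `X ⊆ V(G) ∖ S`, the graph
`G − X` is an `r`-pseudoforest iff `(G − v) − (X ∖ {v})` is an `r`-pseudoforest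
(the latter being the subgraph of `G` induced on the complement of `{v} ∪ X`).
In particular, the instances `(G, S, k, r)` and `(G − v, S, k, r)` of
Disjoint r-pseudoforest Deletion have the same answer. -/
theorem degree_one_reduction {V : Type*} [Fintype V] (G : SimpleGraph V) (r k : ℕ)
    (S : Set V) (v : V) (hvS : v ∉ S) (hdeg : (G.neighborSet v).ncard = 1) :
    (∀ X : Set V, X ⊆ Sᶜ →
      (IsRPseudoforest (G.induce Xᶜ) r ↔ IsRPseudoforest (G.induce (insert v X)ᶜ) r))
    ∧
    ((∃ X : Set V, X ⊆ Sᶜ ∧ X.ncard ≤ k ∧ IsRPseudoforest (G.induce Xᶜ) r) ↔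
      (∃ X : Set V, X ⊆ Sᶜ ∩ {v}ᶜ ∧ X.ncard ≤ k ∧
        IsRPseudoforest (G.induce (insert v X)ᶜ) r)) := by
  classical
  have hdeg' : ∀ a b, G.Adj v a → G.Adj v b → a = b := by
    obtain ⟨u, hu⟩ := Set.ncard_eq_one.mp hdeg
    intro a b ha hb
    have h1 : a ∈ G.neighborSet v := ha
    have h2 : b ∈ G.neighborSet v := hb
    rw [hu, Set.mem_singleton_iff] at h1 h2
    rw [h1, h2]
  have part1 : ∀ X : Set V, X ⊆ Sᶜ →
      (IsRPseudoforest (G.induce Xᶜ) r ↔ IsRPseudoforest (G.induce (insert v X)ᶜ) r) := by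
    intro X hX
    by_cases hvX : v ∈ X
    · rw [Set.insert_eq_self.mpr hvX]
    · constructor
      · exact pseudoforest_anti G r (Set.compl_subset_compl.mpr (Set.subset_insert _ _))
      · intro h
        have key := pseudoforest_extend G r (t := (insert v X)ᶜ)
          (by simp) hdeg' h
        have hset : insert v ((insert v X)ᶜ) = Xᶜ := by
          ext x
          by_cases hxv : x = v <;> simp [hxv, hvX]
        rw [hset] at key
        exact key
  refine ⟨part1, ?_, ?_⟩
  · rintro ⟨X, hXS, hXk, hXpf⟩
    refine ⟨X \ {v}, ?_, ?_, ?_⟩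
    · intro x hx
      exact ⟨hXS hx.1, hx.2⟩
    · exact le_trans (Set.ncard_le_ncard Set.diff_subset (Set.toFinite X)) hXk
    · by_cases hvX : v ∈ X
      · have : insert v (X \ {v}) = X := by
          rw [Set.insert_diff_singleton, Set.insert_eq_self.mpr hvX]
        rw [this]
        exact hXpf
      · rw [Set.diff_singleton_eq_self hvX]
        exact (part1 X hXS).mp hXpf
  · rintro ⟨X, hXS, hXk, hXpf⟩
    have hXS' : X ⊆ Sᶜ := fun x hx => (hXS hx).1
    have hvX : v ∉ X := fun hx => (hXS hx).2 rfl
    exact ⟨X, hXS', hXk, (part1 X hXS').mpr hXpf⟩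
end

section
/- Let G be a finite simple graph and S ⊆ V(G) such that G − S is an r-pseudoforest. Let C be a connected component of G − S such that exactly one edge of G joins V(C) to S, say the edge uv with u ∈ V(C) and v ∈ S. If X ⊆ V(G) ∖ S is an r-pseudoforest deletion set of G with X ∩ V(C) ≠ ∅, then (X ∖ V(C)) ∪ {u} is also an r-pseudoforest deletion set of G, disjoint from S and of size at most |X|. -/
section Helpers

open SimpleGraph Set

variable {V : Type*}

lemma myIsAcyclic_of_hom {W : Type*} {G : SimpleGraph V} {H : SimpleGraph W}
    (f : G →g H) (hf : Function.Injective f) (hH : H.IsAcyclic) : G.IsAcyclic := by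
  intro v c hc
  exact hH (c.map f) (hc.map hf)

lemma myDeleteEdges_induce_congr (G : SimpleGraph V) (T : Set V) (F F' : Set (Sym2 V))
    (h : ∀ e : Sym2 V, (∀ x ∈ e, x ∈ T) → (e ∈ F ↔ e ∈ F')) :
    (G.deleteEdges F).induce T = (G.deleteEdges F').induce T := by
  ext a b
  simp only [comap_adj, Function.Embedding.coe_subtype, deleteEdges_adj]
  have hin : ∀ x ∈ s(a.1, b.1), x ∈ T := by
    intro x hx
    rw [Sym2.mem_iff] at hx
    rcases hx with rfl | rfl
    · exact a.2
    · exact b.2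
  rw [h _ hin]

noncomputable def myInduceDeleteIso (G : SimpleGraph V) (A : Set V) (s : Set ↥A)
    (F : Set (Sym2 ↥A)) :
    ((G.induce A).deleteEdges F).induce s ≃g
      (G.deleteEdges (Sym2.map Subtype.val '' F)).induce (Subtype.val '' s) where
  toEquiv := Equiv.Set.image Subtype.val s Subtype.val_injective
  map_rel_iff' := by
    intro a b
    simp only [comap_adj, Function.Embedding.coe_subtype, deleteEdges_adj,
      Equiv.Set.image_apply, ← Sym2.map_pair_eq Subtype.val,
      (Sym2.map.injective Subtype.val_injective).mem_set_image]

def Good (G : SimpleGraph V) (r : ℕ) (T : Set V) : Prop :=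
  ∃ F : Finset (Sym2 V), F.card ≤ r ∧ ↑F ⊆ G.edgeSet ∧
    ((G.deleteEdges ↑F).induce T).IsAcyclic

lemma good_mono {G : SimpleGraph V} {r : ℕ} {T T' : Set V} (hsub : T' ⊆ T)
    (h : Good G r T) : Good G r T' := by
  obtain ⟨F, hcard, hedge, hac⟩ := h
  refine ⟨F, hcard, hedge, ?_⟩
  have hmt : Set.MapsTo (⇑(Hom.id : G.deleteEdges ↑F →g G.deleteEdges ↑F)) T' T :=
    fun x hx => hsub hx
  exact myIsAcyclic_of_hom (SimpleGraph.induceHom Hom.id hmt)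
    (SimpleGraph.induceHom_injective Hom.id hmt Function.injective_id.injOn) hac

lemma good_of_pseudoforest {G : SimpleGraph V} {r : ℕ} {A : Set V}
    (h : IsRPseudoforest (G.induce A) r) (c : (G.induce A).ConnectedComponent) :
    Good G r (Subtype.val '' c.supp) := by
  classical
  obtain ⟨F, hcard, hedge, hac⟩ := h c
  refine ⟨F.image (Sym2.map Subtype.val), Finset.card_image_le.trans hcard, ?_, ?_⟩
  · intro e he
    simp only [Finset.coe_image, Set.mem_image, Finset.mem_coe] at he
    obtain ⟨e₀, he₀, rfl⟩ := he
    have hmem := hedge he₀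
    induction e₀ using Sym2.ind with
    | _ x y =>
      rw [Sym2.map_pair_eq]
      rw [SimpleGraph.mem_edgeSet] at hmem ⊢
      exact hmem
  · rw [Finset.coe_image]
    have hiso := myInduceDeleteIso G A c.supp (↑F)
    exact myIsAcyclic_of_hom hiso.symm.toHom hiso.symm.toEquiv.injective hac

lemma pseudoforest_of_good {G : SimpleGraph V} {r : ℕ} {A : Set V} [Finite V]
    (h : ∀ c : (G.induce A).ConnectedComponent, Good G r (Subtype.val '' c.supp)) :
    IsRPseudoforest (G.induce A) r := by
  classical
  intro c
  obtain ⟨F, hcard, hedge, hac⟩ := h c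
  have : Fintype ↥A := Fintype.ofFinite _
  have : Fintype (G.induce A).edgeSet := Fintype.ofFinite _
  set F₀ : Finset (Sym2 ↥A) :=
    (G.induce A).edgeFinset.filter (fun e => Sym2.map Subtype.val e ∈ F) with hF₀
  have hmapmem : ∀ e ∈ F₀, Sym2.map Subtype.val e ∈ F := by
    intro e he; rw [hF₀, Finset.mem_filter] at he; exact he.2
  refine ⟨F₀, ?_, ?_, ?_⟩
  · refine le_trans (Finset.card_le_card_of_injOn (Sym2.map Subtype.val) hmapmem ?_) hcard
    exact (Sym2.map.injective Subtype.val_injective).injOn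
  · intro e he
    rw [Finset.mem_coe, hF₀, Finset.mem_filter, SimpleGraph.mem_edgeFinset] at he
    exact he.1
  · have hiso := myInduceDeleteIso G A (s := c.supp) (F := (F₀ : Set (Sym2 ↥A)))
    apply myIsAcyclic_of_hom hiso.toHom hiso.toEquiv.injective
    have heq := myDeleteEdges_induce_congr G (Subtype.val '' c.supp)
      (Sym2.map Subtype.val '' (F₀ : Set (Sym2 ↥A))) (↑F) ?_
    · rw [heq]; exact hac
    · intro e hin
      constructor
      · rintro ⟨e₀, he₀, rfl⟩
        exact hmapmem e₀ he₀
      · intro heF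
        induction e using Sym2.ind with
        | _ x y =>
          have hx := hin x (by simp)
          have hy := hin y (by simp)
          obtain ⟨x₀, hx₀, rfl⟩ := hx
          obtain ⟨y₀, hy₀, rfl⟩ := hy
          refine ⟨s(x₀, y₀), ?_, Sym2.map_pair_eq _ _ _⟩
          rw [Finset.mem_coe, hF₀, Finset.mem_filter, SimpleGraph.mem_edgeFinset]
          refine ⟨?_, by rw [Sym2.map_pair_eq]; exact heF⟩
          rw [SimpleGraph.mem_edgeSet]
          exact hedge heF

end Helpers

open SimpleGraph Set in
/-- Let `G − S` be an `r`-pseudoforest and let `C` be a connected component of `G − S`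
such that exactly one edge of `G` joins `V(C)` to `S`, namely the edge `uv` with
`u ∈ V(C)` and `v ∈ S`. If `X ⊆ V(G) ∖ S` is an `r`-pseudoforest deletion set of `G`
with `X ∩ V(C) ≠ ∅`, then `(X ∖ V(C)) ∪ {u}` is also an `r`-pseudoforest deletion set
of `G`, disjoint from `S` and of size at most `|X|`. -/
theorem replace_by_attachment_vertex {V : Type*} [Fintype V] (G : SimpleGraph V) (r : ℕ)
    (S : Set V) (hS : IsRPseudoforest (G.induce Sᶜ) r)
    (C : (G.induce Sᶜ).ConnectedComponent) (u v : V)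
    (hu : u ∈ Subtype.val '' C.supp) (hv : v ∈ S) (huv : G.Adj u v)
    (huniq : ∀ x y : V, x ∈ Subtype.val '' C.supp → y ∈ S → G.Adj x y → x = u ∧ y = v)
    (X : Set V) (hXS : X ⊆ Sᶜ) (hX : IsRPseudoforest (G.induce Xᶜ) r)
    (hXC : (X ∩ Subtype.val '' C.supp).Nonempty) :
    ((X \ Subtype.val '' C.supp) ∪ {u}) ⊆ Sᶜ
    ∧ ((X \ Subtype.val '' C.supp) ∪ {u}).ncard ≤ X.ncard
    ∧ IsRPseudoforest (G.induce ((X \ Subtype.val '' C.supp) ∪ {u})ᶜ) r := by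
  classical
  set CV : Set V := Subtype.val '' C.supp with hCV
  set Y : Set V := (X \ CV) ∪ {u} with hY
  obtain ⟨u₀, hu₀C, hu₀⟩ := hu
  have huS : u ∈ Sᶜ := hu₀ ▸ u₀.2
  have huY : u ∈ Y := Or.inr rfl
  have hYS : Y ⊆ Sᶜ := by
    rintro y (⟨hyX, -⟩ | rfl)
    · exact hXS hyX
    · exact huS
  obtain ⟨x₀, hx₀X, hx₀C⟩ := hXC
  have hcard : Y.ncard ≤ X.ncard := by
    have h1 : Y.ncard ≤ (X \ CV).ncard + 1 := by
      refine le_trans (Set.ncard_union_le _ _) ?_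
      simp
    have h2 : (X \ CV).ncard ≤ (X \ {x₀}).ncard := by
      refine Set.ncard_le_ncard ?_ (Set.toFinite _)
      rintro y ⟨hyX, hyC⟩
      exact ⟨hyX, fun hy => hyC (by rwa [Set.mem_singleton_iff.mp hy])⟩
    have h3 : (X \ {x₀}).ncard = X.ncard - 1 :=
      Set.ncard_diff_singleton_of_mem hx₀X
    have h4 : 1 ≤ X.ncard := (Set.ncard_pos (Set.toFinite _)).mpr ⟨x₀, hx₀X⟩
    omega
  -- closure of CV under adjacency avoiding u
  have hcl : ∀ a b : V, G.Adj a b → b ∈ CV → b ≠ u → a ∈ CV := by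
    intro a b hab hbC hbu
    by_cases haS : a ∈ S
    · exact absurd (huniq b a hbC haS hab.symm).1 hbu
    · obtain ⟨b₀, hb₀C, rfl⟩ := hbC
      have hadj : (G.induce Sᶜ).Adj ⟨a, haS⟩ b₀ := hab
      refine ⟨⟨a, haS⟩, ?_, rfl⟩
      rw [SimpleGraph.ConnectedComponent.mem_supp_iff] at hb₀C ⊢
      rw [← hb₀C]
      exact SimpleGraph.ConnectedComponent.connectedComponentMk_eq_of_adj hadj
  have hneu : ∀ y : ↥Yᶜ, (y : V) ≠ u := fun y he => y.2 (he ▸ huY)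
  have hXcof : ∀ y : V, y ∈ Yᶜ → y ∉ CV → y ∈ Xᶜ := by
    intro y hy hyC hyX
    exact hy (Or.inl ⟨hyX, hyC⟩)
  have hw1 : ∀ (a b : ↥Yᶜ), (G.induce Yᶜ).Walk a b → (b : V) ∈ CV → (a : V) ∈ CV := by
    intro a b p
    induction p with
    | nil => exact fun h => h
    | @cons a m b h p ih =>
      intro hbC
      exact hcl _ _ h (ih hbC) (hneu m)
  have hw2 : ∀ (a b : ↥Yᶜ), (G.induce Yᶜ).Walk a b → (b : V) ∉ CV → (a : V) ∉ CV := by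
    intro a b p
    induction p with
    | nil => exact fun h => h
    | @cons a m b h p ih =>
      intro hbC haC
      exact ih hbC (hcl _ _ h.symm haC (hneu a))
  have hw3 : ∀ (a b : ↥Yᶜ) (p : (G.induce Yᶜ).Walk a b), (b : V) ∉ CV →
      ∀ (haX : (a : V) ∈ Xᶜ) (hbX : (b : V) ∈ Xᶜ),
        (G.induce Xᶜ).Reachable ⟨a, haX⟩ ⟨b, hbX⟩ := by
    intro a b p
    induction p with
    | nil => exact fun _ _ _ => SimpleGraph.Reachable.refl _
    | @cons a m b h p ih =>
      intro hbC haX hbX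
      have hmC : (m : V) ∉ CV := hw2 _ _ p hbC
      have hmX : (m : V) ∈ Xᶜ := hXcof _ m.2 hmC
      have hadj : (G.induce Xᶜ).Adj ⟨a, haX⟩ ⟨m, hmX⟩ := h
      exact hadj.reachable.trans (ih hbC hmX hbX)
  refine ⟨hYS, hcard, ?_⟩
  refine pseudoforest_of_good ?_
  refine SimpleGraph.ConnectedComponent.ind ?_
  intro w
  by_cases hwC : (w : V) ∈ CV
  · refine good_mono ?_ (good_of_pseudoforest hS C)
    rintro x ⟨x₁, hx₁, rfl⟩
    rw [SimpleGraph.ConnectedComponent.mem_supp_iff] at hx₁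
    obtain ⟨p⟩ := SimpleGraph.ConnectedComponent.eq.mp hx₁
    exact hw1 _ _ p hwC
  · have hwX : (w : V) ∈ Xᶜ := hXcof _ w.2 hwC
    refine good_mono ?_
      (good_of_pseudoforest hX ((G.induce Xᶜ).connectedComponentMk ⟨w, hwX⟩))
    rintro x ⟨x₁, hx₁, rfl⟩
    rw [SimpleGraph.ConnectedComponent.mem_supp_iff] at hx₁
    obtain ⟨p⟩ := SimpleGraph.ConnectedComponent.eq.mp hx₁
    have hx₁C : (x₁ : V) ∉ CV := hw2 _ _ p hwC
    have hx₁X : (x₁ : V) ∈ Xᶜ := hXcof _ x₁.2 hx₁C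
    refine ⟨⟨x₁, hx₁X⟩, ?_, rfl⟩
    rw [SimpleGraph.ConnectedComponent.mem_supp_iff]
    exact SimpleGraph.ConnectedComponent.eq.mpr (hw3 _ _ p hwC hx₁X hwX)
end

section
/- Let G be a finite simple graph, Z ⊆ V(G), u ∈ Z, and k, d non-negative integers. If there exists X ⊆ V(G) ∖ Z with |X| ≤ k such that G − X is a d-quasi-forest, then at most k + d connected components of G − Z both contain a cycle and contain a vertex adjacent in G to u. -/
/-- A graph is a `d`-quasi-forest if every connected component has a feedback vertex set
of size at most `d`. -/
def IsDQuasiForest {V : Type*} (G : SimpleGraph V) (d : ℕ) : Prop :=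
  ∀ c : G.ConnectedComponent, ∃ S : Finset V, S.card ≤ d ∧ ↑S ⊆ c.supp ∧
    (G.induce (c.supp \ ↑S)).IsAcyclic

lemma reach_transfer {V : Type*} (G : SimpleGraph V) {s t : Set V} {a b : ↥s}
    (p : (G.induce s).Walk a b) (hp : ∀ w ∈ p.support, (w : V) ∈ t) :
    ∀ (ha : (a : V) ∈ t) (hb : (b : V) ∈ t),
      (G.induce t).Reachable ⟨a, ha⟩ ⟨b, hb⟩ := by
  induction p with
  | nil => intro ha hb; exact SimpleGraph.Reachable.refl _
  | @cons x y z h q ih =>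
    intro ha hb
    have hy : (y : V) ∈ t := hp y (by simp)
    have hadj : (G.induce t).Adj ⟨x, ha⟩ ⟨y, hy⟩ := by
      simpa using h
    exact hadj.reachable.trans (ih (fun w hw => hp w (by simp [hw])) hy hb)

/-- If there is `X ⊆ V(G) ∖ Z` with `|X| ≤ k` such that `G − X` is a `d`-quasi-forest,
then for `u ∈ Z`, at most `k + d` connected components of `G − Z` both contain a cycle
and contain a vertex adjacent in `G` to `u`. -/
theorem few_cyclic_components_adjacent {V : Type*} [Fintype V] (G : SimpleGraph V)
    (k d : ℕ) (Z : Set V) (u : V) (hu : u ∈ Z)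
    (h : ∃ X : Set V, X ⊆ Zᶜ ∧ X.ncard ≤ k ∧ IsDQuasiForest (G.induce Xᶜ) d) :
    {c : (G.induce Zᶜ).ConnectedComponent |
      ¬ ((G.induce Zᶜ).induce c.supp).IsAcyclic ∧ ∃ x ∈ c.supp, G.Adj u ↑x}.ncard
      ≤ k + d := by
  classical
  obtain ⟨X, hXZ, hXk, hqf⟩ := h
  have huX : u ∈ Xᶜ := fun huX => (hXZ huX) hu
  set H := G.induce Xᶜ with hH
  set c₀ := H.connectedComponentMk ⟨u, huX⟩ with hc₀
  obtain ⟨S₀, hS₀d, hS₀sub, hS₀acyc⟩ := hqf c₀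
  set T : Set V := X ∪ (Subtype.val '' (↑S₀ : Set ↥Xᶜ)) with hT
  have hTfin : T.Finite := Set.toFinite _
  have hTcard : T.ncard ≤ k + d := by
    refine le_trans (Set.ncard_union_le _ _) (add_le_add hXk ?_)
    refine le_trans (Set.ncard_image_le (Set.toFinite _)) ?_
    simpa using hS₀d
  set Bad := {c : (G.induce Zᶜ).ConnectedComponent |
      ¬ ((G.induce Zᶜ).induce c.supp).IsAcyclic ∧ ∃ x ∈ c.supp, G.Adj u ↑x} with hBad
  -- key: every bad component contains a vertex of T
  have key : ∀ c ∈ Bad, ∃ v : V, v ∈ T ∧ ∃ hv : v ∈ Zᶜ, (⟨v, hv⟩ : ↥Zᶜ) ∈ c.supp := by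
    rintro c ⟨hcyc, x, hx, hux⟩
    by_cases hcX : ∃ w : ↥Zᶜ, w ∈ c.supp ∧ (w : V) ∈ X
    · obtain ⟨w, hw, hwX⟩ := hcX
      exact ⟨w, Or.inl hwX, w.2, by simpa using hw⟩
    · push_neg at hcX
      -- all vertices of c avoid X
      have hXfree : ∀ w : ↥Zᶜ, w ∈ c.supp → (w : V) ∈ Xᶜ := fun w hw => hcX w hw
      -- every vertex of c, viewed in H, lies in c₀.supp
      have hin : ∀ w : ↥Zᶜ, (hw : w ∈ c.supp) →
          (⟨(w : V), hXfree w hw⟩ : ↥Xᶜ) ∈ c₀.supp := by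
        intro w hw
        rw [SimpleGraph.ConnectedComponent.mem_supp_iff] at hw hx ⊢
        rw [hc₀, SimpleGraph.ConnectedComponent.eq]
        have hreach : (G.induce Zᶜ).Reachable w x := by
          rw [← hx] at hw
          exact (SimpleGraph.ConnectedComponent.eq).1 hw
        obtain ⟨p⟩ := hreach
        have hsup : ∀ y ∈ p.support, (y : V) ∈ Xᶜ := by
          intro y hy
          refine hXfree y ?_
          rw [SimpleGraph.ConnectedComponent.mem_supp_iff, ← hw,
            SimpleGraph.ConnectedComponent.eq]
          exact ⟨(p.takeUntil y hy).reverse⟩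
        have hreach2 : H.Reachable ⟨(w : V), hXfree w hw⟩
            ⟨(x : V), hsup x p.end_mem_support⟩ :=
          reach_transfer G p hsup _ _
        have hadj : H.Adj ⟨(x : V), hsup x p.end_mem_support⟩ ⟨u, huX⟩ := by
          exact hux.symm
        exact hreach2.trans hadj.reachable
      by_cases hcS : ∃ w : ↥Zᶜ, ∃ (hw : w ∈ c.supp),
          (⟨(w : V), hXfree w hw⟩ : ↥Xᶜ) ∈ S₀
      · obtain ⟨w, hw, hwS⟩ := hcS
        exact ⟨w, Or.inr ⟨_, hwS, rfl⟩, w.2, by simpa using hw⟩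
      · push_neg at hcS
        exfalso
        apply hcyc
        -- build an injective graph hom into the acyclic graph
        set A := H.induce (c₀.supp \ (↑S₀ : Set ↥Xᶜ)) with hA
        obtain ⟨φ, hφval⟩ : ∃ φ : ((G.induce Zᶜ).induce c.supp) →g A,
            ∀ v, (((φ v) : ↥Xᶜ) : V) = ((v : ↥Zᶜ) : V) := by
          refine ⟨⟨fun v => ⟨⟨(v.1 : V), hXfree v.1 v.2⟩, hin v.1 v.2, hcS v.1 v.2⟩, ?_⟩,
            fun v => rfl⟩
          intro a b hab
          exact hab
        have hφinj : Function.Injective φ := by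
          intro a b hab
          have h1 : (((φ a) : ↥Xᶜ) : V) = (((φ b) : ↥Xᶜ) : V) := by rw [hab]
          rw [hφval, hφval] at h1
          exact Subtype.ext (Subtype.ext h1)
        intro v p hp
        exact hS₀acyc _ (hp.map hφinj)
  -- now count via an injection into T
  have : Nonempty V := ⟨u⟩
  set f : (G.induce Zᶜ).ConnectedComponent → V := fun c =>
    if hc : ∃ v : V, v ∈ T ∧ ∃ hv : v ∈ Zᶜ, (⟨v, hv⟩ : ↥Zᶜ) ∈ c.supp then hc.choose
    else u with hf
  have hfspec : ∀ c ∈ Bad, f c ∈ T ∧ ∃ hv : f c ∈ Zᶜ, (⟨f c, hv⟩ : ↥Zᶜ) ∈ c.supp := by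
    intro c hc
    have hex := key c hc
    simp only [hf, dif_pos hex]
    exact hex.choose_spec
  have hinj : Set.InjOn f Bad := by
    intro c₁ h₁ c₂ h₂ hfe
    obtain ⟨-, hv₁, hm₁⟩ := hfspec c₁ h₁
    obtain ⟨-, hv₂, hm₂⟩ := hfspec c₂ h₂
    rw [SimpleGraph.ConnectedComponent.mem_supp_iff] at hm₁ hm₂
    rw [← hm₁, ← hm₂]
    congr 1
    exact Subtype.ext hfe
  calc Bad.ncard ≤ T.ncard :=
        Set.ncard_le_ncard_of_injOn f (fun c hc => (hfspec c hc).1) hinj hTfin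
    _ ≤ k + d := hTcard
end

section
/- Let G be a finite simple graph, k, d non-negative integers, and Z ⊆ V(G) with |Z| ≤ k + 1 such that G − Z is a d-quasi-forest. If there exists X ⊆ V(G) ∖ Z with |X| ≤ k such that G − X is a d-quasi-forest, then at most 2(k + 1) + d connected components C of G − Z satisfy |N_G(V(C)) ∩ Z| ≥ d + 2 (i.e., have at least d + 2 neighbors in Z). -/
set_option maxHeartbeats 1000000

open SimpleGraph

namespace QF

variable {α : Type*} [DecidableEq α] {F : SimpleGraph α}

noncomputable def root (F : SimpleGraph α) (v : α) : α := Quot.out (F.connectedComponentMk v)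

lemma reach_root (F : SimpleGraph α) (v : α) : F.Reachable v (root F v) := by
  have h : F.connectedComponentMk (root F v) = F.connectedComponentMk v := Quot.out_eq _
  exact (ConnectedComponent.exact h).symm

lemma root_adj {x y : α} (h : F.Adj x y) : root F x = root F y := by
  unfold root
  rw [ConnectedComponent.connectedComponentMk_eq_of_adj h]

noncomputable def pathToRoot (F : SimpleGraph α) (v : α) : F.Path v (root F v) :=
  ((reach_root F v).some).toPath

/-- `y` is the parent of `x` in the rooted forest. -/
def Par (F : SimpleGraph α) (x y : α) : Prop :=
  ∃ (h : F.Adj x y) (q : F.Walk y (root F x)), (pathToRoot F x).val = Walk.cons h q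

noncomputable def depth (F : SimpleGraph α) (v : α) : ℕ := (pathToRoot F v).val.length

lemma Par.adj {x y : α} (h : Par F x y) : F.Adj x y := h.choose

lemma Par.unique {x y y' : α} (h : Par F x y) (h' : Par F x y') : y = y' := by
  obtain ⟨a, q, hq⟩ := h
  obtain ⟨a', q', hq'⟩ := h'
  have := hq.symm.trans hq'
  have h1 : (Walk.cons a q).getVert 1 = (Walk.cons a' q').getVert 1 := by rw [this]
  simpa [Walk.getVert_cons_succ] using h1

lemma Par.depth (hF : F.IsAcyclic) {x y : α} (h : Par F x y) :
    depth F y + 1 = depth F x := by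
  obtain ⟨a, q, hq⟩ := h
  have hq' : (Walk.cons a q).IsPath := hq ▸ (pathToRoot F x).2
  have hqp : q.IsPath := hq'.of_cons
  have hr : root F x = root F y := root_adj a
  have hy : pathToRoot F y = ⟨q.copy rfl hr, by simpa using hqp⟩ := hF.path_unique _ _
  unfold QF.depth
  rw [hy, hq]
  simp

lemma Par.ne (hF : F.IsAcyclic) {x y : α} (h : Par F x y) : y ≠ x := by
  intro he
  have := h.depth hF
  rw [he] at this
  omega

lemma adj_par (hF : F.IsAcyclic) {x w : α} (h : F.Adj x w) : Par F x w ∨ Par F w x := by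
  classical
  by_cases hw : w ∈ (pathToRoot F x).val.support
  · left
    have hq : ((pathToRoot F x).val.takeUntil w hw).IsPath := (pathToRoot F x).2.takeUntil hw
    have hs : (⟨(pathToRoot F x).val.takeUntil w hw, hq⟩ : F.Path x w) = Path.singleton h :=
      hF.path_unique _ _
    have hs' : (pathToRoot F x).val.takeUntil w hw = Walk.cons h Walk.nil :=
      congrArg Subtype.val hs
    refine ⟨h, (pathToRoot F x).val.dropUntil w hw, ?_⟩
    conv_lhs => rw [← (pathToRoot F x).val.take_spec hw]
    rw [hs']
    simp [Walk.cons_append]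
  · right
    have hr : root F x = root F w := root_adj h
    have hq : (Walk.cons h.symm (pathToRoot F x).val).IsPath := (pathToRoot F x).2.cons hw
    have hy : pathToRoot F w = ⟨(Walk.cons h.symm (pathToRoot F x).val).copy rfl hr, by
        simpa using hq⟩ := hF.path_unique _ _
    refine ⟨h.symm, (pathToRoot F x).val.copy rfl hr, ?_⟩
    rw [hy]
    simp

lemma chain (hF : F.IsAcyclic) : ∀ {u y : α} (q : F.Walk u y) (t : α), q.IsPath → Par F u t →
    t ∉ q.support → ∃ z, Par F y z ∧ (z ∈ q.support ∨ z = t) ∧ z ≠ y := by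
  intro u y q
  induction q with
  | nil => exact fun t _ hp _ => ⟨t, hp, Or.inr rfl, hp.ne hF⟩
  | @cons a b c h r ih =>
    intro t hq hp ht
    rcases adj_par hF h with hp' | hp'
    · exfalso
      have : b = t := hp'.unique hp
      exact ht (by rw [← this]; simp)
    · have hrp : r.IsPath := hq.of_cons
      have ha : a ∉ r.support := (Walk.cons_isPath_iff _ _ |>.mp hq).2
      obtain ⟨z, hz, hzs, hzy⟩ := ih a hrp hp' ha
      refine ⟨z, hz, ?_, hzy⟩
      rcases hzs with h1 | h1
      · exact Or.inl (by simp [h1])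
      · rw [h1]; exact Or.inl (by simp)

/-- In an acyclic graph, a "walk-connected" set has at most one vertex whose
parent is outside the set. -/
lemma special_unique (hF : F.IsAcyclic) (c : Set α)
    (hc : ∀ x ∈ c, ∀ y ∈ c, ∃ p : F.Walk x y, ∀ v ∈ p.support, v ∈ c)
    {x y : α} (hx : x ∈ c) (hy : y ∈ c)
    (hsx : ∀ z, Par F x z → z ∉ c) (hsy : ∀ z, Par F y z → z ∉ c) : x = y := by
  by_contra hxy
  obtain ⟨p, hp⟩ := hc x hx y hy
  have hsupp : ∀ v ∈ p.toPath.val.support, v ∈ c := fun v hv =>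
    hp v (p.support_toPath_subset hv)
  obtain ⟨w, hw⟩ : ∃ w : F.Path x y, ∀ v ∈ w.val.support, v ∈ c := ⟨p.toPath, hsupp⟩
  cases hq : w.val with
  | nil => exact hxy (by have := congrArg (fun t => t.length) hq; exact (Walk.eq_of_length_eq_zero (by simpa using this)) )
  | @cons _ b _ h r =>
    have hwp : (Walk.cons h r).IsPath := hq ▸ w.2
    rcases adj_par hF h with hp' | hp'
    · exact hsx b hp' (hw b (by rw [hq]; simp))
    · have ha : x ∉ r.support := (Walk.cons_isPath_iff _ _ |>.mp hwp).2
      obtain ⟨z, hz, hzs, _⟩ := chain hF r x hwp.of_cons hp' ha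
      refine hsy z hz ?_
      rcases hzs with h1 | h1
      · exact hw z (by rw [hq]; simp [h1])
      · rw [h1]; exact hx



lemma forest_count {α : Type*} [Fintype α] {F : SimpleGraph α} (hF : F.IsAcyclic)
    (𝒜 : Finset (Set α))
    (hconn : ∀ A ∈ 𝒜, ∀ x ∈ A, ∀ y ∈ A, ∃ p : F.Walk x y, ∀ v ∈ p.support, v ∈ A)
    (hdisj : ∀ A ∈ 𝒜, ∀ B ∈ 𝒜, A ≠ B → Disjoint A B)
    (W : Set α) (hW : ∀ A ∈ 𝒜, Disjoint A W) :
    ∑ A ∈ 𝒜, {w ∈ W | ∃ x ∈ A, F.Adj x w}.ncard ≤ 𝒜.card + W.ncard := by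
  classical
  set N : Set α → Finset α := fun A => (Set.toFinite {w ∈ W | ∃ x ∈ A, F.Adj x w}).toFinset with hN
  have hNmem : ∀ A w, w ∈ N A ↔ w ∈ W ∧ ∃ x ∈ A, F.Adj x w := by
    intro A w
    simp [hN, Set.Finite.mem_toFinset]
  have h1 : ∀ A ∈ 𝒜, {w ∈ W | ∃ x ∈ A, F.Adj x w}.ncard = (N A).card := by
    intro A _
    exact Set.ncard_eq_toFinset_card _ _
  rw [Finset.sum_congr rfl h1, ← Finset.card_sigma]
  have key : (𝒜.sigma N).card ≤ (𝒜.disjSum (Set.toFinite W).toFinset).card := by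
    apply Finset.card_le_card_of_injOn
      (fun p => if ∃ x ∈ p.1, Par F p.2 x then Sum.inr p.2 else Sum.inl p.1)
    · intro p hp
      rw [Finset.mem_coe, Finset.mem_sigma] at hp
      rw [Finset.mem_coe]
      by_cases hcase : ∃ x ∈ p.1, Par F p.2 x
      · simp only [if_pos hcase]
        refine Finset.inr_mem_disjSum.mpr ?_
        rw [Set.Finite.mem_toFinset]
        exact ((hNmem _ _).mp hp.2).1
      · simp only [if_neg hcase]
        exact Finset.inl_mem_disjSum.mpr hp.1
    · rintro ⟨A, w⟩ hp ⟨B, w'⟩ hq heq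
      rw [Finset.mem_coe, Finset.mem_sigma] at hp hq
      obtain ⟨hA, hw⟩ := hp
      obtain ⟨hB, hw'⟩ := hq
      rw [hNmem] at hw hw'
      by_cases hc1 : ∃ x ∈ A, Par F w x <;> by_cases hc2 : ∃ x ∈ B, Par F w' x <;>
        simp only [if_pos, if_neg, hc1, hc2, if_true, if_false] at heq
      · -- both inr
        have hww' : w = w' := Sum.inr.inj heq
        obtain ⟨x, hxA, hpx⟩ := hc1
        obtain ⟨x', hxB, hpx'⟩ := hc2
        subst hww'
        have hxx' : x = x' := hpx.unique hpx'
        have hAB : A = B := by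
          by_contra hne
          exact ((hdisj A hA B hB hne).ne_of_mem hxA (hxx' ▸ hxB)) rfl
        subst hAB
        rfl
      · exact absurd heq (by simp)
      · exact absurd heq (by simp)
      · -- both inl
        have hAB : A = B := Sum.inl.inj heq
        subst hAB
        obtain ⟨x, hxA, hadj⟩ := hw.2
        obtain ⟨x', hxA', hadj'⟩ := hw'.2
        have hpx : Par F x w := by
          rcases adj_par hF hadj with h' | h'
          · exact h'
          · exact absurd ⟨x, hxA, h'⟩ hc1
        have hpx' : Par F x' w' := by
          rcases adj_par hF hadj' with h' | h'
          · exact h'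
          · exact absurd ⟨x', hxA', h'⟩ hc2
        have hxx' : x = x' := by
          refine special_unique hF A (hconn A hA) hxA hxA' ?_ ?_
          · intro z hz hzA
            exact Set.disjoint_left.mp (hW A hA) hzA ((hpx.unique hz) ▸ hw.1)
          · intro z hz hzA
            exact Set.disjoint_left.mp (hW A hA) hzA ((hpx'.unique hz) ▸ hw'.1)
        subst hxx'
        have : w = w' := hpx.unique hpx'
        subst this
        rfl
  calc (𝒜.sigma N).card ≤ (𝒜.disjSum (Set.toFinite W).toFinset).card := key
    _ = 𝒜.card + W.ncard := by
      rw [Finset.card_disjSum, Set.ncard_eq_toFinset_card]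

lemma walk_in_supp {V : Type*} {G : SimpleGraph V} {u v : V}
    (h : G.connectedComponentMk u = G.connectedComponentMk v) :
    ∃ p : G.Walk u v, ∀ w ∈ p.support,
      G.connectedComponentMk w = G.connectedComponentMk u := by
  classical
  obtain ⟨p⟩ := ConnectedComponent.exact h
  refine ⟨p, fun w hw => ?_⟩
  exact (ConnectedComponent.sound ⟨p.takeUntil w hw⟩).symm

lemma walk_transfer {V : Type*} {G : SimpleGraph V} {s t : Set V} {x y : ↥s}
    (p : (G.induce s).Walk x y) : ∀ (cs : Set V),
    (∀ v ∈ p.support, (v : V) ∈ cs) → cs ⊆ t → ∀ (hx : ↑x ∈ t) (hy : ↑y ∈ t),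
    ∃ q : (G.induce t).Walk ⟨↑x, hx⟩ ⟨↑y, hy⟩, ∀ v ∈ q.support, (v : V) ∈ cs := by
  induction p with
  | nil =>
    intro cs hc _ hx hy
    exact ⟨Walk.nil, by simpa using hc _ (by simp)⟩
  | @cons a b c hadj p ih =>
    intro cs hc hct hx hy
    have hb : (↑b : V) ∈ cs := hc _ (by simp)
    obtain ⟨q, hq⟩ := ih cs (fun v hv => hc v (by simp [hv])) hct (hct hb) hy
    refine ⟨Walk.cons (by exact hadj) q, ?_⟩
    intro v hv
    replace hv := List.mem_cons.mp hv
    rcases hv with hv | hv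
    · rw [hv]; exact hc _ (by simp)
    · exact hq v hv

lemma walk_induce {V : Type*} {G : SimpleGraph V} {x y : V}
    (p : G.Walk x y) : ∀ (A : Set V), (∀ v ∈ p.support, v ∈ A) →
    ∀ (hx : x ∈ A) (hy : y ∈ A),
    ∃ q : (G.induce A).Walk ⟨x, hx⟩ ⟨y, hy⟩, ∀ v ∈ q.support, (v : V) ∈ p.support := by
  induction p with
  | nil =>
    intro A hA hx hy
    exact ⟨Walk.nil, by simp⟩
  | @cons a b c hadj p ih =>
    intro A hA hx hy
    have hb : b ∈ A := hA _ (by simp)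
    obtain ⟨q, hq⟩ := ih A (fun v hv => hA v (by simp [hv])) hb hy
    refine ⟨Walk.cons (by exact hadj) q, ?_⟩
    intro v hv
    replace hv := List.mem_cons.mp hv
    rcases hv with hv | hv
    · rw [hv]; simp
    · simp [hq v hv]

lemma sup_mem_inj {V : Type*} {G : SimpleGraph V} {s : Set V}
    {c c' : (G.induce s).ConnectedComponent} {v : V}
    (h : v ∈ Subtype.val '' c.supp) (h' : v ∈ Subtype.val '' c'.supp) : c = c' := by
  obtain ⟨x, hx, rfl⟩ := h
  obtain ⟨x', hx', hvx⟩ := h'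
  have hxx : x' = x := Subtype.val_injective hvx
  rw [ConnectedComponent.mem_supp_iff] at hx hx'
  rw [← hx, ← hx', hxx]

lemma sup_nonempty {V : Type*} {G : SimpleGraph V} {s : Set V}
    (c : (G.induce s).ConnectedComponent) : (Subtype.val '' c.supp).Nonempty := by
  obtain ⟨v, hv⟩ := Quot.exists_rep c
  exact ⟨↑v, v, by rw [ConnectedComponent.mem_supp_iff]; exact hv, rfl⟩

lemma sup_subset {V : Type*} {G : SimpleGraph V} {s : Set V}
    (c : (G.induce s).ConnectedComponent) : Subtype.val '' c.supp ⊆ s := by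
  rintro v ⟨x, _, rfl⟩
  exact x.2

lemma core_bound {V : Type*} [Fintype V] {G : SimpleGraph V} {Z X : Set V} {d : ℕ}
    (hZX : Z ⊆ Xᶜ)
    (D : (G.induce Xᶜ).ConnectedComponent)
    (S : Finset ↥Xᶜ) (hScard : S.card ≤ d) (hSsupp : ↑S ⊆ D.supp)
    (hSac : ((G.induce Xᶜ).induce (D.supp \ ↑S)).IsAcyclic)
    (fib : Finset ((G.induce Zᶜ).ConnectedComponent))
    (hmany : ∀ c ∈ fib, d + 2 ≤ {z ∈ Z | ∃ x ∈ c.supp, G.Adj z ↑x}.ncard)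
    (hsupX : ∀ c ∈ fib, Subtype.val '' c.supp ⊆ Xᶜ)
    (hsupD : ∀ c ∈ fib, ∀ v : ↥Xᶜ, (↑v : V) ∈ Subtype.val '' c.supp → v ∈ D.supp)
    (hwalk : ∀ c ∈ fib, ∀ u v : ↥Xᶜ, (↑u : V) ∈ Subtype.val '' c.supp →
      (↑v : V) ∈ Subtype.val '' c.supp →
      ∃ q : (G.induce Xᶜ).Walk u v, ∀ w ∈ q.support, (↑w : V) ∈ Subtype.val '' c.supp)
    (hfibne : fib.Nonempty) :
    fib.card ≤ (Z ∩ Subtype.val '' D.supp).ncard := by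
  classical
  set A : Set ↥Xᶜ := D.supp \ ↑S with hA
  set SZ := S.filter (fun v : ↥Xᶜ => (↑v : V) ∈ Z) with hSZ
  set SV := S.filter (fun v : ↥Xᶜ => ¬ (↑v : V) ∈ Z) with hSVd
  set ctil : (G.induce Zᶜ).ConnectedComponent → Set ↥A :=
    fun c => {a : ↥A | (↑↑a : V) ∈ Subtype.val '' c.supp} with hctil
  set fib1 := fib.filter (fun c => ∃ v ∈ S, (↑v : V) ∈ Subtype.val '' c.supp) with hfib1d
  set fib2 := fib.filter (fun c => ¬ ∃ v ∈ S, (↑v : V) ∈ Subtype.val '' c.supp) with hfib2d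
  have hsplit : fib1.card + fib2.card = fib.card :=
    Finset.card_filter_add_card_filter_not _
  obtain ⟨cw, hcw⟩ := hfibne
  obtain ⟨vw, hvw⟩ := sup_nonempty cw
  haveI hXne : Nonempty ↥Xᶜ := ⟨⟨vw, hsupX cw hcw hvw⟩⟩
  have hzD : d + 2 ≤ (Z ∩ Subtype.val '' D.supp).ncard := by
    refine le_trans (hmany cw hcw) (Set.ncard_le_ncard ?_ (Set.toFinite _))
    rintro z ⟨hz, x, hx, hadj⟩
    refine ⟨hz, ⟨z, hZX hz⟩, ?_, rfl⟩
    have hxs : (↑x : V) ∈ Subtype.val '' cw.supp := ⟨x, hx, rfl⟩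
    have hxD : (⟨↑x, hsupX cw hcw hxs⟩ : ↥Xᶜ) ∈ D.supp := hsupD cw hcw _ hxs
    rw [ConnectedComponent.mem_supp_iff] at hxD ⊢
    rw [← hxD]
    exact ConnectedComponent.connectedComponentMk_eq_of_adj (by exact hadj)
  -- fib1 bound
  have hfib1b : fib1.card + SZ.card ≤ d := by
    have h1 : fib1.card ≤ SV.card := by
      set g : (G.induce Zᶜ).ConnectedComponent → ↥Xᶜ := fun c =>
        if h : ∃ v ∈ S, (↑v : V) ∈ Subtype.val '' c.supp then h.choose
        else Classical.arbitrary ↥Xᶜ with hg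
      refine Finset.card_le_card_of_injOn (s := fib1) (t := SV) g ?_ ?_
      · intro c hc
        rw [Finset.mem_coe, hfib1d, Finset.mem_filter] at hc
        have hgc : g c = hc.2.choose := dif_pos hc.2
        obtain ⟨hS, hsup⟩ := hc.2.choose_spec
        rw [hgc, hSVd, Finset.mem_coe, Finset.mem_filter]
        exact ⟨hS, sup_subset c hsup⟩
      · intro c hc c' hc' heq
        rw [Finset.mem_coe, hfib1d, Finset.mem_filter] at hc hc'
        have hgc : g c = hc.2.choose := dif_pos hc.2
        have hgc' : g c' = hc'.2.choose := dif_pos hc'.2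
        rw [hgc, hgc'] at heq
        exact sup_mem_inj hc.2.choose_spec.2 (heq ▸ hc'.2.choose_spec.2)
    have h2 : SZ.card + SV.card = S.card := by
      have hsv : SV = S \ SZ := by
        ext a
        simp only [hSVd, hSZ, Finset.mem_filter, Finset.mem_sdiff]
        tauto
      have hsub : SZ ⊆ S := Finset.filter_subset _ _
      rw [hsv, Finset.card_sdiff_of_subset hsub]
      exact Nat.add_sub_cancel' (Finset.card_le_card hsub)
    omega
  have hfib2sub : ∀ c ∈ fib2, c ∈ fib := fun c hc => (Finset.mem_filter.mp hc).1
  have hctilA : ∀ c ∈ fib2, ∀ w : ↥Xᶜ, (↑w : V) ∈ Subtype.val '' c.supp → w ∈ A := by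
    intro c hc w hw
    refine ⟨hsupD c (hfib2sub c hc) w hw, fun hwS => ?_⟩
    rw [hfib2d, Finset.mem_filter] at hc
    exact hc.2 ⟨w, hwS, hw⟩
  have hctilmem : ∀ c ∈ fib2, ∀ (v : V), v ∈ Subtype.val '' c.supp →
      ∃ a : ↥A, (↑↑a : V) = v ∧ a ∈ ctil c := by
    intro c hc v hv
    have hvX : v ∈ Xᶜ := hsupX c (hfib2sub c hc) hv
    have haA : (⟨v, hvX⟩ : ↥Xᶜ) ∈ A := hctilA c hc _ hv
    exact ⟨⟨⟨v, hvX⟩, haA⟩, rfl, hv⟩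
  have hconnF : ∀ c ∈ fib2, ∀ x ∈ ctil c, ∀ y ∈ ctil c,
      ∃ p : ((G.induce Xᶜ).induce A).Walk x y, ∀ v ∈ p.support, v ∈ ctil c := by
    intro c hc x hx y hy
    obtain ⟨q, hq⟩ := hwalk c (hfib2sub c hc) ↑x ↑y hx hy
    obtain ⟨q', hq'⟩ := walk_induce q A (fun v hv => hctilA c hc v (hq v hv)) x.2 y.2
    exact ⟨q', fun v hv => hq _ (hq' v hv)⟩
  set 𝒜 := fib2.image ctil with h𝒜d
  have hctilinj : Set.InjOn ctil fib2 := by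
    intro c hc c' hc' heq
    obtain ⟨v, hv⟩ := sup_nonempty c
    obtain ⟨a, hav, ha⟩ := hctilmem c hc v hv
    have ha' : a ∈ ctil c' := heq ▸ ha
    exact sup_mem_inj ha ha'
  have h𝒜card : 𝒜.card = fib2.card := Finset.card_image_of_injOn hctilinj
  set W : Set ↥A := {a | (↑↑a : V) ∈ Z} with hW
  have hsum : ∑ A' ∈ 𝒜, {w ∈ W | ∃ x ∈ A', ((G.induce Xᶜ).induce A).Adj x w}.ncard
      ≤ 𝒜.card + W.ncard := by
    apply forest_count hSac
    · intro A' hA'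
      obtain ⟨c, hc, rfl⟩ := Finset.mem_image.mp hA'
      exact fun x hx y hy => hconnF c hc x hx y hy
    · intro A' hA' B' hB' hne
      obtain ⟨c, hc, rfl⟩ := Finset.mem_image.mp hA'
      obtain ⟨c', hc', rfl⟩ := Finset.mem_image.mp hB'
      rw [Set.disjoint_left]
      intro a ha ha'
      exact hne (by rw [sup_mem_inj ha ha'])
    · intro A' hA'
      obtain ⟨c, hc, rfl⟩ := Finset.mem_image.mp hA'
      rw [Set.disjoint_left]
      intro a ha ha'
      exact (sup_subset c ha) ha'
  have hterm : ∀ A' ∈ 𝒜,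
      d + 2 ≤ {w ∈ W | ∃ x ∈ A', ((G.induce Xᶜ).induce A).Adj x w}.ncard + SZ.card := by
    intro A' hA'
    obtain ⟨c, hc, rfl⟩ := Finset.mem_image.mp hA'
    set NW := {w ∈ W | ∃ x ∈ ctil c, ((G.induce Xᶜ).induce A).Adj x w} with hNW
    obtain ⟨v0, hv0⟩ := sup_nonempty c
    obtain ⟨a0, _, _⟩ := hctilmem c hc v0 hv0
    haveI : Nonempty ↥A := ⟨a0⟩
    set SZV : Finset V := SZ.image (fun v : ↥Xᶜ => (↑v : V)) with hSZVd
    have hSZVcard : SZV.card = SZ.card :=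
      Finset.card_image_of_injective _ (by intro a b hab; exact Subtype.val_injective hab)
    set T := {z ∈ Z | ∃ x ∈ c.supp, G.Adj z ↑x} with hT
    have h1 : T.ncard ≤ (T \ ↑SZV).ncard + SZ.card := by
      have := Set.ncard_le_ncard_diff_add_ncard T ↑SZV (Set.toFinite _)
      rwa [Set.ncard_coe_finset, hSZVcard] at this
    have hkey : ∀ z ∈ T \ ↑SZV, ∃ a : ↥A, (↑↑a : V) = z ∧ a ∈ NW := by
      rintro z ⟨⟨hzZ, x, hx, hadj⟩, hzS⟩
      have hxs : (↑x : V) ∈ Subtype.val '' c.supp := ⟨x, hx, rfl⟩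
      have hxX : (↑x : V) ∈ Xᶜ := hsupX c (hfib2sub c hc) hxs
      have hxA : (⟨↑x, hxX⟩ : ↥Xᶜ) ∈ A := hctilA c hc _ hxs
      have hzX : z ∈ Xᶜ := hZX hzZ
      have hzadj : (G.induce Xᶜ).Adj ⟨z, hzX⟩ ⟨↑x, hxX⟩ := by exact hadj
      have hzDs : (⟨z, hzX⟩ : ↥Xᶜ) ∈ D.supp := by
        rw [ConnectedComponent.mem_supp_iff]
        have hxD : (⟨↑x, hxX⟩ : ↥Xᶜ) ∈ D.supp := hsupD c (hfib2sub c hc) _ hxs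
        rw [ConnectedComponent.mem_supp_iff] at hxD
        rw [← hxD]
        exact ConnectedComponent.connectedComponentMk_eq_of_adj hzadj
      have hzS' : (⟨z, hzX⟩ : ↥Xᶜ) ∉ (↑S : Set ↥Xᶜ) := by
        intro hmem
        refine hzS ?_
        rw [Finset.mem_coe, hSZVd, Finset.mem_image]
        exact ⟨⟨z, hzX⟩, Finset.mem_filter.mpr ⟨hmem, hzZ⟩, rfl⟩
      refine ⟨⟨⟨z, hzX⟩, hzDs, hzS'⟩, rfl, hzZ, ⟨⟨⟨↑x, hxX⟩, hxA⟩, hxs, hzadj.symm⟩⟩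
    have h2 : (T \ ↑SZV).ncard ≤ NW.ncard := by
      set f : V → ↥A := fun z =>
        if h : ∃ a : ↥A, (↑↑a : V) = z ∧ a ∈ NW then h.choose
        else Classical.arbitrary ↥A with hf
      apply Set.ncard_le_ncard_of_injOn f
      · intro z hz
        have hfz : f z = (hkey z hz).choose := dif_pos (hkey z hz)
        rw [hfz]
        exact (hkey z hz).choose_spec.2
      · intro z hz z' hz' heq
        have hfz : f z = (hkey z hz).choose := dif_pos (hkey z hz)
        have hfz' : f z' = (hkey z' hz').choose := dif_pos (hkey z' hz')
        have e1 : (↑↑(f z) : V) = z := by rw [hfz]; exact (hkey z hz).choose_spec.1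
        have e2 : (↑↑(f z') : V) = z' := by rw [hfz']; exact (hkey z' hz').choose_spec.1
        rw [← e1, ← e2]
        exact congrArg (fun a : ↥A => (↑↑a : V)) heq
    have h3 := hmany c (hfib2sub c hc)
    rw [← hT] at h3
    omega
  have hWz : W.ncard + SZ.card ≤ (Z ∩ Subtype.val '' D.supp).ncard := by
    set WV := (fun a : ↥A => (↑↑a : V)) '' W with hWVd
    have hinj2 : Function.Injective (fun a : ↥A => (↑↑a : V)) := by
      intro a b hab
      exact Subtype.val_injective (Subtype.val_injective hab)
    have e1 : WV.ncard = W.ncard := Set.ncard_image_of_injective _ hinj2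
    set SZV : Finset V := SZ.image (fun v : ↥Xᶜ => (↑v : V)) with hSZVd
    have hSZVcard : SZV.card = SZ.card :=
      Finset.card_image_of_injective _ (by intro a b hab; exact Subtype.val_injective hab)
    have hdisj : Disjoint WV (↑SZV : Set V) := by
      rw [Set.disjoint_left]
      rintro z ⟨a, haW, rfl⟩ hzS
      rw [Finset.mem_coe, hSZVd, Finset.mem_image] at hzS
      obtain ⟨sv, hsv, hsve⟩ := hzS
      have hsva : sv = a.1 := Subtype.val_injective hsve
      exact a.2.2 (hsva ▸ ((Finset.mem_filter.mp hsv).1))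
    have hsub : WV ∪ ↑SZV ⊆ Z ∩ Subtype.val '' D.supp := by
      rintro z (⟨a, haW, rfl⟩ | hzS)
      · exact ⟨haW, a.1, a.2.1, rfl⟩
      · rw [Finset.mem_coe, hSZVd, Finset.mem_image] at hzS
        obtain ⟨sv, hsv, rfl⟩ := hzS
        rw [Finset.mem_filter] at hsv
        exact ⟨hsv.2, sv, hSsupp hsv.1, rfl⟩
    have hle := Set.ncard_le_ncard hsub (Set.toFinite _)
    rwa [Set.ncard_union_eq hdisj (Set.toFinite _) (Set.toFinite _), e1,
      Set.ncard_coe_finset, hSZVcard] at hle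
  have hlow : 𝒜.card * (d + 2) ≤
      (∑ A' ∈ 𝒜, {w ∈ W | ∃ x ∈ A', ((G.induce Xᶜ).induce A).Adj x w}.ncard)
        + 𝒜.card * SZ.card := by
    have h := Finset.sum_le_sum hterm
    rw [Finset.sum_const, smul_eq_mul] at h
    rw [Finset.sum_add_distrib, Finset.sum_const, smul_eq_mul] at h
    exact h
  rcases Nat.eq_zero_or_pos fib2.card with hr0 | hrpos
  · omega
  · rw [h𝒜card] at hlow hsum
    set Ssum := ∑ A' ∈ 𝒜, {w ∈ W | ∃ x ∈ A', ((G.induce Xᶜ).induce A).Adj x w}.ncard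
    set r := fib2.card with hrd
    set q := SZ.card with hqd
    have hqle : q ≤ d := by omega
    set v := d - q with hvd
    have hqv : q + v = d := by omega
    have e1 : r * (d + 2) = r * q + (r * v + r + r) := by
      rw [← hqv]; ring
    have e2 : v ≤ r * v := Nat.le_mul_of_pos_left v hrpos
    have hS1 : r * (d + 2) ≤ (r + W.ncard) + r * q :=
      le_trans hlow (Nat.add_le_add_right hsum _)
    have hS2 : r * v + r ≤ W.ncard := by
      rw [e1] at hS1
      linarith
    have hA1 : fib1.card ≤ v := by omega
    linarith

end QF
open QF


/-- Let `|Z| ≤ k + 1` with `G − Z` a `d`-quasi-forest. If there is `X ⊆ V(G) ∖ Z` with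
`|X| ≤ k` such that `G − X` is a `d`-quasi-forest, then at most `2(k + 1) + d` connected
components of `G − Z` have at least `d + 2` neighbors in `Z`. -/
theorem few_components_with_many_neighbors {V : Type*} [Fintype V] (G : SimpleGraph V)
    (k d : ℕ) (Z : Set V) (hZcard : Z.ncard ≤ k + 1)
    (hZ : IsDQuasiForest (G.induce Zᶜ) d)
    (h : ∃ X : Set V, X ⊆ Zᶜ ∧ X.ncard ≤ k ∧ IsDQuasiForest (G.induce Xᶜ) d) :
    {c : (G.induce Zᶜ).ConnectedComponent |
      d + 2 ≤ {z ∈ Z | ∃ x ∈ c.supp, G.Adj z ↑x}.ncard}.ncard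
      ≤ 2 * (k + 1) + d := by
  classical
  obtain ⟨X, hXZ, hXcard, hX⟩ := h
  have hZX : Z ⊆ Xᶜ := fun z hz hzx => hXZ hzx hz
  set 𝒞 : Set ((G.induce Zᶜ).ConnectedComponent) :=
    {c | d + 2 ≤ {z ∈ Z | ∃ x ∈ c.supp, G.Adj z ↑x}.ncard} with h𝒞
  rcases Set.eq_empty_or_nonempty 𝒞 with he | ⟨c₀, hc₀⟩
  · rw [he]; simp
  have hc₀' : d + 2 ≤ {z ∈ Z | ∃ x ∈ c₀.supp, G.Adj z ↑x}.ncard := hc₀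
  have hTne : {z ∈ Z | ∃ x ∈ c₀.supp, G.Adj z ↑x}.Nonempty := by
    apply Set.nonempty_of_ncard_ne_zero
    omega
  obtain ⟨z₀, hz₀Z, _⟩ := hTne
  haveI : Nonempty V := ⟨z₀⟩
  haveI : Nonempty ↑Xᶜ := ⟨⟨z₀, hZX hz₀Z⟩⟩
  set 𝒞₁ := {c ∈ 𝒞 | ((Subtype.val '' c.supp) ∩ X).Nonempty} with h𝒞₁
  set 𝒞₂ := {c ∈ 𝒞 | ¬ ((Subtype.val '' c.supp) ∩ X).Nonempty} with h𝒞₂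
  have hunion : 𝒞 = 𝒞₁ ∪ 𝒞₂ := by
    ext c
    simp only [h𝒞₁, h𝒞₂, Set.mem_union, Set.mem_setOf_eq, Set.mem_sep_iff]
    tauto
  have h1 : 𝒞₁.ncard ≤ k := by
    refine le_trans ?_ hXcard
    set f1 : (G.induce Zᶜ).ConnectedComponent → V := fun c =>
      if h : ((Subtype.val '' c.supp) ∩ X).Nonempty then h.choose else Classical.arbitrary V
      with hf1
    apply Set.ncard_le_ncard_of_injOn f1
    · intro c hc
      have hfc : f1 c = hc.2.choose := dif_pos hc.2
      rw [hfc]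
      exact hc.2.choose_spec.2
    · intro c hc c' hc' heq
      have hfc : f1 c = hc.2.choose := dif_pos hc.2
      have hfc' : f1 c' = hc'.2.choose := dif_pos hc'.2
      have hvv : hc.2.choose = hc'.2.choose := (hfc.symm.trans heq).trans hfc'
      have hmem' := hc'.2.choose_spec.1
      rw [← hvv] at hmem'
      exact sup_mem_inj hc.2.choose_spec.1 hmem'
  have hsupXc : ∀ c ∈ 𝒞₂, Subtype.val '' c.supp ⊆ Xᶜ := by
    intro c hc v hv hvX
    exact hc.2 ⟨v, hv, hvX⟩
  have hwalkH : ∀ c ∈ 𝒞₂, ∀ u v : ↑Xᶜ, (↑u : V) ∈ Subtype.val '' c.supp →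
      (↑v : V) ∈ Subtype.val '' c.supp →
      ∃ q : (G.induce Xᶜ).Walk u v, ∀ w ∈ q.support, (↑w : V) ∈ Subtype.val '' c.supp := by
    intro c hc u v hu hv
    obtain ⟨xu, hxu, hxe⟩ := hu
    obtain ⟨xv, hxv, hve⟩ := hv
    rw [ConnectedComponent.mem_supp_iff] at hxu hxv
    obtain ⟨p, hp⟩ := walk_in_supp (hxu.trans hxv.symm)
    have hpsup : ∀ w ∈ p.support, (↑w : V) ∈ Subtype.val '' c.supp := by
      intro w hw
      exact ⟨w, by rw [ConnectedComponent.mem_supp_iff, hp w hw, hxu], rfl⟩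
    obtain ⟨q, hq⟩ := walk_transfer p (Subtype.val '' c.supp) hpsup (hsupXc c hc)
      (hsupXc c hc ⟨xu, by rw [ConnectedComponent.mem_supp_iff]; exact hxu, rfl⟩)
      (hsupXc c hc ⟨xv, by rw [ConnectedComponent.mem_supp_iff]; exact hxv, rfl⟩)
    refine ⟨(q.copy (Subtype.ext hxe) (Subtype.ext hve)), ?_⟩
    intro w hw
    rw [Walk.support_copy] at hw
    exact hq w hw
  set Dmap : (G.induce Zᶜ).ConnectedComponent → (G.induce Xᶜ).ConnectedComponent := fun c =>
    if h : ∃ v : ↑Xᶜ, (↑v : V) ∈ Subtype.val '' c.supp then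
      (G.induce Xᶜ).connectedComponentMk h.choose
    else (G.induce Xᶜ).connectedComponentMk (Classical.arbitrary _) with hDmapd
  have hDmapeq : ∀ c ∈ 𝒞₂, ∀ v : ↑Xᶜ, (↑v : V) ∈ Subtype.val '' c.supp →
      (G.induce Xᶜ).connectedComponentMk v = Dmap c := by
    intro c hc v hv
    have hex : ∃ v : ↑Xᶜ, (↑v : V) ∈ Subtype.val '' c.supp := ⟨v, hv⟩
    have hd : Dmap c = (G.induce Xᶜ).connectedComponentMk hex.choose := dif_pos hex
    rw [hd]
    obtain ⟨q, _⟩ := hwalkH c hc v hex.choose hv hex.choose_spec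
    exact ConnectedComponent.sound q.reachable
  have h2 : 𝒞₂.ncard ≤ k + 1 := by
    set C2 := (Set.toFinite 𝒞₂).toFinset with hC2
    have hmemC2 : ∀ c, c ∈ C2 ↔ c ∈ 𝒞₂ := fun c => Set.Finite.mem_toFinset _
    rw [Set.ncard_eq_toFinset_card 𝒞₂ (Set.toFinite _), ← hC2,
      Finset.card_eq_sum_card_image Dmap C2]
    have hper : ∀ D ∈ C2.image Dmap,
        (C2.filter (fun c => Dmap c = D)).card ≤ (Z ∩ Subtype.val '' D.supp).ncard := by
      intro D hD
      obtain ⟨S, hScard, hSsupp, hSac⟩ := hX D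
      apply core_bound hZX D S hScard hSsupp hSac
      · intro c hc
        exact ((hmemC2 c).mp (Finset.mem_filter.mp hc).1).1
      · intro c hc
        exact hsupXc c ((hmemC2 c).mp (Finset.mem_filter.mp hc).1)
      · intro c hc v hv
        have hc2 := (hmemC2 c).mp (Finset.mem_filter.mp hc).1
        rw [ConnectedComponent.mem_supp_iff, hDmapeq c hc2 v hv]
        exact (Finset.mem_filter.mp hc).2
      · intro c hc
        exact hwalkH c ((hmemC2 c).mp (Finset.mem_filter.mp hc).1)
      · obtain ⟨c, hcmem, hcd⟩ := Finset.mem_image.mp hD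
        exact ⟨c, Finset.mem_filter.mpr ⟨hcmem, hcd⟩⟩
    refine le_trans (Finset.sum_le_sum hper) (le_trans ?_ hZcard)
    set t : (G.induce Xᶜ).ConnectedComponent → Finset V := fun D =>
      (Set.toFinite (Z ∩ Subtype.val '' D.supp)).toFinset with ht
    have htmem : ∀ D z, z ∈ t D ↔ z ∈ Z ∩ Subtype.val '' D.supp :=
      fun D z => Set.Finite.mem_toFinset _
    have hcards : ∀ D, (Z ∩ Subtype.val '' D.supp).ncard = (t D).card :=
      fun D => Set.ncard_eq_toFinset_card _ _
    have hdisjt : ∀ D ∈ C2.image Dmap, ∀ D' ∈ C2.image Dmap, D ≠ D' →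
        Disjoint (t D) (t D') := by
      intro D _ D' _ hne
      rw [Finset.disjoint_left]
      intro z hz hz'
      obtain ⟨_, xv, hxv, hxe⟩ := (htmem D z).mp hz
      obtain ⟨_, xv', hxv', hxe'⟩ := (htmem D' z).mp hz'
      have hxx : xv = xv' := Subtype.val_injective (hxe.trans hxe'.symm)
      rw [ConnectedComponent.mem_supp_iff] at hxv hxv'
      exact hne (by rw [← hxv, hxx, hxv'])
    calc ∑ D ∈ C2.image Dmap, (Z ∩ Subtype.val '' D.supp).ncard
        = ∑ D ∈ C2.image Dmap, (t D).card := Finset.sum_congr rfl (fun D _ => hcards D)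
      _ = ((C2.image Dmap).biUnion t).card := (Finset.card_biUnion hdisjt).symm
      _ ≤ ((Set.toFinite Z).toFinset).card := by
          apply Finset.card_le_card
          intro z hz
          obtain ⟨D, _, hzD⟩ := Finset.mem_biUnion.mp hz
          rw [Set.Finite.mem_toFinset]
          exact ((htmem D z).mp hzD).1
      _ = Z.ncard := (Set.ncard_eq_toFinset_card _ _).symm
  calc 𝒞.ncard ≤ 𝒞₁.ncard + 𝒞₂.ncard := by
        rw [hunion]; exact Set.ncard_union_le _ _
    _ ≤ k + (k + 1) := Nat.add_le_add h1 h2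
    _ ≤ 2 * (k + 1) + d := by omega
end

section
/- Let G be a finite simple graph, d a non-negative integer, and u ≠ v two vertices of G joined by d + 2 pairwise internally vertex-disjoint paths. Then every set S ⊆ V(G) with |S| ≤ d such that G − S is acyclic contains u or contains v. -/
/-- Lift a walk whose support lies in `s` to a walk in the induced graph. -/
lemma walk_lift_induce {V : Type*} (G : SimpleGraph V) (s : Set V) :
    ∀ {a b : V} (w : G.Walk a b), (∀ x ∈ w.support, x ∈ s) →
    ∀ (ha : a ∈ s) (hb : b ∈ s),
    ∃ w' : (G.induce s).Walk ⟨a, ha⟩ ⟨b, hb⟩,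
      w'.map (SimpleGraph.Embedding.induce s).toHom = w := by
  intro a b w
  induction w with
  | nil => intro _ ha hb; exact ⟨SimpleGraph.Walk.nil, rfl⟩
  | @cons a c b hadj w ih =>
      intro hsup ha hb
      have hc : c ∈ s := hsup c (by simp)
      obtain ⟨w', hw'⟩ := ih (fun x hx => hsup x (by simp [hx])) hc hb
      exact ⟨SimpleGraph.Walk.cons (by simpa using hadj) w', by simp [hw']⟩

/-- If `u ≠ v` are joined by `d + 2` pairwise internally vertex-disjoint (distinct) paths,
then every set `S` of at most `d` vertices such that `G − S` is acyclic contains `u`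
or contains `v`. -/
theorem mem_of_many_disjoint_paths {V : Type*} [Fintype V] (G : SimpleGraph V) (d : ℕ)
    (u v : V) (huv : u ≠ v)
    (p : Fin (d + 2) → G.Path u v) (hdist : Function.Injective p)
    (hdisj : ∀ i j, i ≠ j →
      ∀ x, x ∈ (p i).1.support → x ∈ (p j).1.support → x = u ∨ x = v)
    (S : Set V) (hS : S.ncard ≤ d) (hac : (G.induce Sᶜ).IsAcyclic) :
    u ∈ S ∨ v ∈ S := by
  by_contra h
  push_neg at h
  obtain ⟨hu, hv⟩ := h
  classical
  -- bad indices: paths meeting S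
  set B : Set (Fin (d + 2)) := {i | ∃ x ∈ S, x ∈ (p i).1.support} with hB
  have hBcard : B.ncard ≤ d := by
    have : B.ncard ≤ S.ncard := by
      apply Set.ncard_le_ncard_of_injOn
        (fun i => if h : i ∈ B then h.choose else u)
      · intro i hi
        simp only [dif_pos hi]
        exact hi.choose_spec.1
      · intro i hi j hj hij
        by_contra hne
        simp only [dif_pos hi, dif_pos hj] at hij
        have hxS : hi.choose ∈ S := hi.choose_spec.1
        have := hdisj i j hne hi.choose hi.choose_spec.2 (hij ▸ hj.choose_spec.2)
        rcases this with h1 | h1 <;> rw [h1] at hxS <;> [exact hu hxS; exact hv hxS]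
    omega
  -- find two good indices
  have hcompl : 1 < Bᶜ.ncard := by
    have := Set.ncard_add_ncard_compl B
    simp [Set.ncard_univ] at this
    omega
  obtain ⟨i, hi, j, hj, hij⟩ := (Set.one_lt_ncard (Set.toFinite _)).mp hcompl
  have hsup : ∀ k ∈ Bᶜ, ∀ x ∈ (p k).1.support, x ∈ Sᶜ := by
    intro k hk x hx hxS
    exact hk ⟨x, hxS, hx⟩
  have huS : u ∈ Sᶜ := hu
  have hvS : v ∈ Sᶜ := hv
  obtain ⟨wi, hwi⟩ := walk_lift_induce G Sᶜ (p i).1 (hsup i hi) huS hvS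
  obtain ⟨wj, hwj⟩ := walk_lift_induce G Sᶜ (p j).1 (hsup j hj) huS hvS
  have hpi : wi.IsPath := SimpleGraph.Walk.IsPath.of_map (f := (SimpleGraph.Embedding.induce Sᶜ).toHom) (by rw [hwi]; exact (p i).2)
  have hpj : wj.IsPath := SimpleGraph.Walk.IsPath.of_map (f := (SimpleGraph.Embedding.induce Sᶜ).toHom) (by rw [hwj]; exact (p j).2)
  have : (⟨wi, hpi⟩ : (G.induce Sᶜ).Path ⟨u, huS⟩ ⟨v, hvS⟩) = ⟨wj, hpj⟩ :=
    SimpleGraph.isAcyclic_iff_path_unique.mp hac _ _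
  have hw : wi = wj := by simpa using this
  apply hij
  apply hdist
  apply Subtype.ext
  rw [← hwi, ← hwj, hw]
end

section
/- Let G be a finite simple graph, d a non-negative integer, and N ⊆ V(G) a set of vertices such that every two distinct vertices u, v ∈ N are joined in G by d + 2 pairwise internally vertex-disjoint paths. Then every set S ⊆ V(G) with |S| ≤ d such that G − S is acyclic contains all vertices of N except at most one. -/
private lemma lift_to_induce {V : Type*} {G : SimpleGraph V} {s : Set V} :
    ∀ {u v : V} (p : G.Walk u v) (_ : ∀ x ∈ p.support, x ∈ s) (hu : u ∈ s) (hv : v ∈ s),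
    ∃ q : (G.induce s).Walk ⟨u, hu⟩ ⟨v, hv⟩,
      q.map (SimpleGraph.Embedding.induce s).toHom = p := by
  intro u v p
  induction p with
  | nil => intro _ hu hv; exact ⟨.nil, rfl⟩
  | @cons a b c h p ih =>
    intro hp hu hv
    have hb : b ∈ s := hp b (by simp)
    obtain ⟨q, hq⟩ := ih (fun x hx => hp x (by simp [hx])) hb hv
    exact ⟨.cons (by exact h) q, by subst hq; rfl⟩

/-- Let `N` be a set of vertices such that every two distinct `u, v ∈ N` are joined by
`d + 2` pairwise internally vertex-disjoint (distinct) paths. Then every set `S` of at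
most `d` vertices such that `G − S` is acyclic contains all vertices of `N` except at
most one. -/
theorem all_but_one_of_many_disjoint_paths {V : Type*} [Fintype V] (G : SimpleGraph V)
    (d : ℕ) (N : Set V)
    (hN : ∀ u ∈ N, ∀ v ∈ N, u ≠ v →
      ∃ p : Fin (d + 2) → G.Path u v, Function.Injective p ∧
        ∀ i j, i ≠ j → ∀ x, x ∈ (p i).1.support → x ∈ (p j).1.support → x = u ∨ x = v)
    (S : Set V) (hS : S.ncard ≤ d) (hac : (G.induce Sᶜ).IsAcyclic) :
    (N \ S).Subsingleton := by
  intro u hu v hv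
  by_contra hne
  obtain ⟨p, hpinj, hdisj⟩ := hN u hu.1 v hv.1 hne
  classical
  -- the set of "bad" indices whose path meets S
  set T : Set (Fin (d + 2)) := {i | ∃ x ∈ S, x ∈ (p i).1.support} with hT
  have hTcard : T.ncard ≤ S.ncard := by
    have : ∀ i ∈ T, (∃ x ∈ S, x ∈ (p i).1.support) := fun i hi => hi
    choose f hfS hfsupp using this
    apply Set.ncard_le_ncard_of_injOn (fun i => if h : i ∈ T then f i h else u)
    · intro i hi; simp only [hi, dif_pos]; exact hfS i hi
    · intro i hi j hj hij
      simp only [hi, hj, dif_pos] at hij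
      by_contra hijne
      have := hdisj i j hijne (f i hi) (hfsupp i hi) (hij ▸ hfsupp j hj)
      rcases this with h | h
      · exact hu.2 (h ▸ hfS i hi)
      · exact hv.2 (h ▸ hfS i hi)
  have hcompl : 1 < Tᶜ.ncard := by
    have h1 := T.ncard_add_ncard_compl
    have h2 : Nat.card (Fin (d + 2)) = d + 2 := by simp
    omega
  obtain ⟨i, j, hi, hj, hij⟩ := (Set.one_lt_ncard_iff Tᶜ.toFinite).mp hcompl
  -- both paths avoid S
  have havoid : ∀ k, k ∈ Tᶜ → ∀ x ∈ (p k).1.support, x ∈ Sᶜ := by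
    intro k hk x hx hxS
    exact hk ⟨x, hxS, hx⟩
  have huS : u ∈ Sᶜ := hu.2
  have hvS : v ∈ Sᶜ := hv.2
  obtain ⟨qi, hqi⟩ := lift_to_induce (p i).1 (havoid i hi) huS hvS
  obtain ⟨qj, hqj⟩ := lift_to_induce (p j).1 (havoid j hj) huS hvS
  have hqip : qi.IsPath := SimpleGraph.Walk.IsPath.of_map (f := _) (hqi ▸ (p i).2)
  have hqjp : qj.IsPath := SimpleGraph.Walk.IsPath.of_map (f := _) (hqj ▸ (p j).2)
  have := hac.path_unique ⟨qi, hqip⟩ ⟨qj, hqjp⟩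
  have hq : qi = qj := by simpa using this
  have : p i = p j := by
    apply Subtype.ext
    rw [← hqi, ← hqj, hq]
  exact hij (hpinj this)
end

section
/- Let G be a finite simple graph, k, d non-negative integers, Z ⊆ V(G), and u ∈ Z. Suppose there exist k + d + 1 pairwise vertex-disjoint paths in G − Z, each of which joins two distinct neighbors of u in G. Then for every X ⊆ V(G) ∖ Z with |X| ≤ k such that G − X is a d-quasi-forest, every feedback vertex set of size at most d of the connected component of u in G − X contains u. -/
lemma walk_induce_aux {V : Type*} {G : SimpleGraph V} {s : Set V} :
    ∀ {x y : V} (w : G.Walk x y) (hs : ∀ v ∈ w.support, v ∈ s)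
      (hx : x ∈ s) (hy : y ∈ s),
    ∃ w' : (G.induce s).Walk ⟨x, hx⟩ ⟨y, hy⟩,
      w'.map (SimpleGraph.Embedding.induce s).toHom = w := by
  intro x y w
  induction w with
  | nil => intro _ hx hy; exact ⟨SimpleGraph.Walk.nil, rfl⟩
  | cons h w ih =>
    intro hs hx hy
    obtain ⟨w', hw'⟩ := ih (fun v hv => hs v (by simp [hv])) (hs _ (by simp)) hy
    exact ⟨SimpleGraph.Walk.cons (by exact h) w', by
      refine Eq.trans (b := SimpleGraph.Walk.cons h (w'.map (SimpleGraph.Embedding.induce s).toHom)) rfl ?_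
      rw [hw']
      rfl⟩

/-- Let `u ∈ Z` and suppose there are `k + d + 1` pairwise vertex-disjoint paths in
`G − Z`, each joining two distinct neighbors of `u` in `G`. Then for every
`X ⊆ V(G) ∖ Z` with `|X| ≤ k` such that `G − X` is a `d`-quasi-forest, every feedback
vertex set of size at most `d` of the connected component of `u` in `G − X`
contains `u`. -/
theorem forced_in_every_fvs {V : Type*} [Fintype V] (G : SimpleGraph V)
    (k d : ℕ) (Z : Set V) (u : V) (hu : u ∈ Z)
    (hpaths : ∃ (a b : Fin (k + d + 1) → V) (p : ∀ i, G.Walk (a i) (b i)),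
      (∀ i, a i ≠ b i) ∧ (∀ i, G.Adj u (a i)) ∧ (∀ i, G.Adj u (b i)) ∧
      (∀ i, (p i).IsPath) ∧ (∀ i, ∀ x ∈ (p i).support, x ∉ Z) ∧
      (∀ i j, i ≠ j → ∀ x, x ∈ (p i).support → x ∉ (p j).support))
    (X : Set V) (hXZ : X ⊆ Zᶜ) (hXk : X.ncard ≤ k)
    (hq : IsDQuasiForest (G.induce Xᶜ) d)
    (S : Set V) (hSd : S.ncard ≤ d)
    (hScomp : S ⊆ Subtype.val ''
      ((G.induce Xᶜ).connectedComponentMk ⟨u, fun h => hXZ h hu⟩).supp)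
    (hSfvs : (G.induce ((Subtype.val ''
      ((G.induce Xᶜ).connectedComponentMk ⟨u, fun h => hXZ h hu⟩).supp) \ S)).IsAcyclic) :
    u ∈ S := by
  classical
  by_contra hus
  obtain ⟨a, b, p, hab, hua, hub, hp, hZ, hdisj⟩ := hpaths
  have huX : u ∉ X := fun h => hXZ h hu
  -- find a good index whose path avoids X ∪ S
  have hgood : ∃ i : Fin (k + d + 1), ∀ x ∈ (p i).support, x ∉ X ∪ S := by
    by_contra hcon
    push_neg at hcon
    choose f hf1 hf2 using hcon
    have hinj : Function.Injective f := by
      intro i j hij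
      by_contra hne
      exact hdisj i j hne _ (hf1 i) (hij ▸ hf1 j)
    have hfW : Function.Injective (fun i => (⟨f i, hf2 i⟩ : (X ∪ S : Set V))) := by
      intro i j hij
      exact hinj (congrArg Subtype.val hij)
    have hle := Nat.card_le_card_of_injective _ hfW
    rw [Nat.card_eq_fintype_card, Fintype.card_fin, Nat.card_coe_set_eq] at hle
    have := le_trans hle (le_trans (Set.ncard_union_le X S) (add_le_add hXk hSd))
    omega
  obtain ⟨i, hi⟩ := hgood
  have hiX : ∀ x ∈ (p i).support, x ∉ X := fun x hx h => hi x hx (Or.inl h)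
  have hiS : ∀ x ∈ (p i).support, x ∉ S := fun x hx h => hi x hx (Or.inr h)
  have hiu : u ∉ (p i).support := fun h => hZ i u h hu
  set u' : (Xᶜ : Set V) := ⟨u, huX⟩ with hu'
  set c0 := (G.induce Xᶜ).connectedComponentMk u' with hc0
  -- every vertex of the path is in the component of u in G − X
  have hsupp : ∀ x ∈ (p i).support, x ∈ Subtype.val '' c0.supp := by
    intro x hx
    have hxX : x ∈ (Xᶜ : Set V) := hiX x hx
    obtain ⟨w', -⟩ := walk_induce_aux (s := (Xᶜ : Set V))
      (SimpleGraph.Walk.cons (hua i) ((p i).takeUntil x hx))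
      (by
        intro v hv
        rw [SimpleGraph.Walk.support_cons, List.mem_cons] at hv
        rcases hv with rfl | hv
        · exact huX
        · exact hiX v (SimpleGraph.Walk.support_takeUntil_subset _ hx hv))
      huX hxX
    refine ⟨⟨x, hxX⟩, ?_, rfl⟩
    rw [SimpleGraph.ConnectedComponent.mem_supp_iff, hc0, SimpleGraph.ConnectedComponent.eq]
    exact ⟨w'.reverse⟩
  set T : Set V := (Subtype.val '' c0.supp) \ S with hT
  have huT : u ∈ T := by
    refine ⟨⟨u', ?_, rfl⟩, hus⟩
    rw [SimpleGraph.ConnectedComponent.mem_supp_iff]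
  have hpathT : ∀ x ∈ (p i).support, x ∈ T := fun x hx => ⟨hsupp x hx, hiS x hx⟩
  set q : G.Walk (a i) u := (p i).concat (hub i).symm with hq'
  set c : G.Walk u u := SimpleGraph.Walk.cons (hua i) q with hc
  have hq_path : q.IsPath := by
    rw [← SimpleGraph.Walk.isPath_reverse_iff, hq', SimpleGraph.Walk.reverse_concat,
      SimpleGraph.Walk.cons_isPath_iff]
    exact ⟨(hp i).reverse, by simpa using hiu⟩
  have hcyc : c.IsCycle := by
    rw [hc, SimpleGraph.Walk.cons_isCycle_iff]
    refine ⟨hq_path, ?_⟩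
    rw [hq', SimpleGraph.Walk.edges_concat, List.concat_eq_append, List.mem_append]
    rintro (h | h)
    · exact hiu (SimpleGraph.Walk.fst_mem_support_of_mem_edges _ h)
    · rw [List.mem_singleton, Sym2.eq_iff] at h
      rcases h with ⟨rfl, -⟩ | ⟨-, h2⟩
      · exact hiu ((p i).end_mem_support)
      · exact hab i h2
  have hcsupp : ∀ v ∈ c.support, v ∈ T := by
    intro v hv
    rw [hc, SimpleGraph.Walk.support_cons, List.mem_cons] at hv
    rcases hv with rfl | hv
    · exact huT
    · rw [hq', SimpleGraph.Walk.support_concat,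
        List.mem_append, List.mem_singleton] at hv
      rcases hv with hv | rfl
      · exact hpathT v hv
      · exact huT
  obtain ⟨c', hc'⟩ := walk_induce_aux c hcsupp huT huT
  have hc'cyc : c'.IsCycle :=
    (SimpleGraph.Walk.map_isCycle_iff_of_injective Subtype.val_injective).1
      (by rw [hc']; exact hcyc)
  exact hSfvs c' hc'cyc
end
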